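/- arXiv:1610.09834 — 3 statements merged into one kernel-verified Lean document; each statement's English description precedes it below -/
import Mathlib

section
/- There exists a nonempty finite sequence of members of the family W whose product in F equals the identity element of F if and only if there exists a subset U ⊆ {1,…,k} with ∑_{i∈U} s_i = x (i.e., the subset sum instance (s₁,…,s_k; x) has a solution). -/
/-- The free group on the `2k+4` generators `g₀, …, g_{2k+1}, a, b`:
`g j = FreeGroup.of (Sum.inl j)`, `a = FreeGroup.of (Sum.inr false)`,
`b = FreeGroup.of (Sum.inr true)`. -/
abbrev Fgrp (k : ℕ) := FreeGroup (Fin (2 * k + 2) ⊕ Bool)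

/-- The generator `g_j`. -/
def gGen {k : ℕ} (j : Fin (2 * k + 2)) : Fgrp k := FreeGroup.of (Sum.inl j)

/-- The generator `a`. -/
def aGen {k : ℕ} : Fgrp k := FreeGroup.of (Sum.inr false)

/-- The generator `b`. -/
def bGen {k : ℕ} : Fgrp k := FreeGroup.of (Sum.inr true)

/-- Index type for the family `W` of `4k+2` elements. -/
abbrev Widx (k : ℕ) := Fin k ⊕ Fin k ⊕ Fin k ⊕ Fin k ⊕ Bool

/-- The family `W`.  The index `i : Fin k` corresponds to the `1`-based index `i+1`,
and `s : Fin k → ℕ` lists `s₁, …, s_k`: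
* `u_{i+1} = g_i · a^{s_{i+1}} · g_{i+1}⁻¹`,
* `v_{i+1} = g_i · g_{i+1}⁻¹`,
* `u'_{i+1} = g_{k+i+1} · b^{s_{i+1}} · g_{k+i+2}⁻¹`,
* `v'_{i+1} = g_{k+i+1} · g_{k+i+2}⁻¹`,
* `c = g_k · a^{-x} · g_{k+1}⁻¹`,
* `d = g_{2k+1} · b^{-x} · g₀⁻¹`. -/
def Wfam {k : ℕ} (s : Fin k → ℕ) (x : ℕ) : Widx k → Fgrp k
  | Sum.inl i =>
      gGen ⟨(i : ℕ), by have := i.isLt; omega⟩ * aGen ^ (s i) *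
        (gGen ⟨(i : ℕ) + 1, by have := i.isLt; omega⟩)⁻¹
  | Sum.inr (Sum.inl i) =>
      gGen ⟨(i : ℕ), by have := i.isLt; omega⟩ *
        (gGen ⟨(i : ℕ) + 1, by have := i.isLt; omega⟩)⁻¹
  | Sum.inr (Sum.inr (Sum.inl i)) =>
      gGen ⟨k + (i : ℕ) + 1, by have := i.isLt; omega⟩ * bGen ^ (s i) *
        (gGen ⟨k + (i : ℕ) + 2, by have := i.isLt; omega⟩)⁻¹
  | Sum.inr (Sum.inr (Sum.inr (Sum.inl i))) =>
      gGen ⟨k + (i : ℕ) + 1, by have := i.isLt; omega⟩ *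
        (gGen ⟨k + (i : ℕ) + 2, by have := i.isLt; omega⟩)⁻¹
  | Sum.inr (Sum.inr (Sum.inr (Sum.inr false))) =>
      gGen ⟨k, by omega⟩ * (aGen ^ x)⁻¹ * (gGen ⟨k + 1, by omega⟩)⁻¹
  | Sum.inr (Sum.inr (Sum.inr (Sum.inr true))) =>
      gGen ⟨2 * k + 1, by omega⟩ * (bGen ^ x)⁻¹ * (gGen ⟨0, by omega⟩)⁻¹


namespace SSAux

open Monoid Multiplicative

variable {k : ℕ}

abbrev Vtx (k : ℕ) := Fin (2 * k + 2)
abbrev Mfam (k : ℕ) : (Vtx k ⊕ Bool) → Type := fun _ => Multiplicative ℤ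
abbrev Letter (k : ℕ) := Σ i : Vtx k ⊕ Bool, Mfam k i

def lG (q : Vtx k) (n : ℤ) : Letter k := ⟨Sum.inl q, Multiplicative.ofAdd n⟩
def lH (t : Bool) (n : ℤ) : Letter k := ⟨Sum.inr t, Multiplicative.ofAdd n⟩

/-- generator-index-to-coprod element -/
def oE (y : Vtx k ⊕ Bool) (n : ℤ) : CoprodI (Mfam k) :=
  CoprodI.of (i := y) (Multiplicative.ofAdd n)

abbrev oG (q : Vtx k) (n : ℤ) : CoprodI (Mfam k) := oE (Sum.inl q) n
abbrev oH (t : Bool) (n : ℤ) : CoprodI (Mfam k) := oE (Sum.inr t) n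

lemma oE_add (y : Vtx k ⊕ Bool) (m n : ℤ) : oE y m * oE y n = oE y (m + n) := by
  simp only [oE, ← map_mul, ← ofAdd_add]

lemma oE_zero (y : Vtx k ⊕ Bool) : oE y 0 = 1 := by
  rw [oE, ofAdd_zero, map_one]

lemma oE_inv (y : Vtx k ⊕ Bool) (n : ℤ) : (oE y n)⁻¹ = oE y (-n) := by
  refine inv_eq_of_mul_eq_one_right ?_
  rw [oE_add, add_neg_cancel, oE_zero]

lemma oE_pow (y : Vtx k ⊕ Bool) (n : ℕ) : (oE y 1) ^ n = oE y n := by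
  induction n with
  | zero => simpa using (oE_zero y).symm
  | succ n ih => rw [pow_succ, ih, oE_add]; norm_num

/-- The homomorphism to the free product of `2k+4` copies of `ℤ`. -/
def φ (k : ℕ) : Fgrp k →* CoprodI (Mfam k) :=
  FreeGroup.lift fun y => oE y 1

lemma φ_gGen (j : Vtx k) : φ k (gGen j) = oG j 1 := FreeGroup.lift_apply_of
lemma φ_gGen_inv (j : Vtx k) : φ k (gGen j)⁻¹ = oG j (-1) := by
  rw [map_inv, φ_gGen, oG, oE_inv]
lemma φ_aGen_pow (n : ℕ) : φ k (aGen ^ n) = oH false n := by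
  rw [map_pow, φ, aGen, FreeGroup.lift_apply_of, oH, oE_pow]
lemma φ_bGen_pow (n : ℕ) : φ k (bGen ^ n) = oH true n := by
  rw [map_pow, φ, bGen, FreeGroup.lift_apply_of, oH, oE_pow]
lemma φ_aGen_pow_inv (n : ℕ) : φ k ((aGen ^ n)⁻¹) = oH false (-n) := by
  rw [map_inv, φ_aGen_pow, oH, oE_inv]
lemma φ_bGen_pow_inv (n : ℕ) : φ k ((bGen ^ n)⁻¹) = oH true (-n) := by
  rw [map_inv, φ_bGen_pow, oH, oE_inv]

/-- source vertex of an edge -/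
def esrc (k : ℕ) : Widx k → Vtx k
  | Sum.inl i => ⟨(i : ℕ), by have := i.isLt; omega⟩
  | Sum.inr (Sum.inl i) => ⟨(i : ℕ), by have := i.isLt; omega⟩
  | Sum.inr (Sum.inr (Sum.inl i)) => ⟨k + (i : ℕ) + 1, by have := i.isLt; omega⟩
  | Sum.inr (Sum.inr (Sum.inr (Sum.inl i))) => ⟨k + (i : ℕ) + 1, by have := i.isLt; omega⟩
  | Sum.inr (Sum.inr (Sum.inr (Sum.inr false))) => ⟨k, by omega⟩
  | Sum.inr (Sum.inr (Sum.inr (Sum.inr true))) => ⟨2 * k + 1, by omega⟩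

def etgt (k : ℕ) : Widx k → Vtx k
  | Sum.inl i => ⟨(i : ℕ) + 1, by have := i.isLt; omega⟩
  | Sum.inr (Sum.inl i) => ⟨(i : ℕ) + 1, by have := i.isLt; omega⟩
  | Sum.inr (Sum.inr (Sum.inl i)) => ⟨k + (i : ℕ) + 2, by have := i.isLt; omega⟩
  | Sum.inr (Sum.inr (Sum.inr (Sum.inl i))) => ⟨k + (i : ℕ) + 2, by have := i.isLt; omega⟩
  | Sum.inr (Sum.inr (Sum.inr (Sum.inr false))) => ⟨k + 1, by omega⟩
  | Sum.inr (Sum.inr (Sum.inr (Sum.inr true))) => ⟨0, by omega⟩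

def etyp (k : ℕ) : Widx k → Bool
  | Sum.inl _ => false
  | Sum.inr (Sum.inl _) => false
  | Sum.inr (Sum.inr (Sum.inl _)) => true
  | Sum.inr (Sum.inr (Sum.inr (Sum.inl _))) => true
  | Sum.inr (Sum.inr (Sum.inr (Sum.inr false))) => false
  | Sum.inr (Sum.inr (Sum.inr (Sum.inr true))) => true

def eexp (s : Fin k → ℕ) (x : ℕ) : Widx k → ℤ
  | Sum.inl i => (s i : ℤ)
  | Sum.inr (Sum.inl _) => 0
  | Sum.inr (Sum.inr (Sum.inl i)) => (s i : ℤ)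
  | Sum.inr (Sum.inr (Sum.inr (Sum.inl _))) => 0
  | Sum.inr (Sum.inr (Sum.inr (Sum.inr _))) => -(x : ℤ)

lemma φ_Wfam (s : Fin k → ℕ) (x : ℕ) (e : Widx k) :
    φ k (Wfam s x e) = oG (esrc k e) 1 * oH (etyp k e) (eexp s x e) * oG (etgt k e) (-1) := by
  rcases e with i | i | i | i | b
  · simp only [Wfam, esrc, etgt, etyp, eexp, map_mul, φ_gGen, φ_gGen_inv, φ_aGen_pow]
  · simp only [Wfam, esrc, etgt, etyp, eexp, map_mul, φ_gGen, φ_gGen_inv]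
    rw [oH, oE_zero, mul_one]
  · simp only [Wfam, esrc, etgt, etyp, eexp, map_mul, φ_gGen, φ_gGen_inv, φ_bGen_pow]
  · simp only [Wfam, esrc, etgt, etyp, eexp, map_mul, φ_gGen, φ_gGen_inv]
    rw [oH, oE_zero, mul_one]
  · cases b
    · simp only [Wfam, esrc, etgt, etyp, eexp, map_mul, φ_gGen, φ_gGen_inv, φ_aGen_pow_inv]
    · simp only [Wfam, esrc, etgt, etyp, eexp, map_mul, φ_gGen, φ_gGen_inv, φ_bGen_pow_inv]


/-- value of a letter list in the free product -/
def vl (L : List (Letter k)) : CoprodI (Mfam k) :=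
  (L.map fun l => CoprodI.of l.2).prod

@[simp] lemma vl_nil : vl ([] : List (Letter k)) = 1 := rfl
@[simp] lemma vl_cons (a : Letter k) (L : List (Letter k)) :
    vl (a :: L) = CoprodI.of a.2 * vl L := by simp [vl]

lemma of_lG (q : Vtx k) (n : ℤ) : CoprodI.of (lG q n).2 = oG q n := rfl
lemma of_lH (t : Bool) (n : ℤ) : CoprodI.of (lH (k := k) t n).2 = oH t n := rfl

/-- first-block bookkeeping -/
def Ledger (s : Fin k → ℕ) (x : ℕ) (p : Vtx k) (t : Bool) (n : ℤ) : Prop :=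
  n ≠ 0 ∧ ∃ (c : Bool) (U : Finset (Fin k)),
    n = (∑ i ∈ U, (s i : ℤ)) - (cond c (x : ℤ) 0) ∧
    (cond t ((p : ℕ) ≥ k + 1 ∧ ∀ i ∈ U, (p : ℕ) ≤ k + 1 + (i : ℕ))
      ((p : ℕ) ≤ k ∧ ∀ i ∈ U, (p : ℕ) ≤ (i : ℕ)))

/-- the state invariant: `lG p 1 :: t` is the current reduced word -/
inductive GT (s : Fin k → ℕ) (x : ℕ) : Vtx k → List (Letter k) → Prop
  | dnil (p q : Vtx k) (j : ℕ) (hq : (q : ℕ) = j + 1) (hpj : (p : ℕ) ≤ j)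
      (hz : j < k ∨ k + 1 ≤ (p : ℕ)) : GT s x p [lG q (-1)]
  | dcons (p q p' : Vtx k) (t : List (Letter k)) (hqp : q ≠ p) (hqp' : q ≠ p')
      (h : GT s x p' t) : GT s x p (lG q (-1) :: lG p' 1 :: t)
  | hb (p : Vtx k) (t₁ : Bool) (n₁ : ℤ) (r : List (Letter k))
      (hl : Ledger s x p t₁ n₁)
      (hr1 : ∀ l ∈ r, l.2 ≠ (1 : Multiplicative ℤ))
      (hr2 : (lH t₁ n₁ :: r).Chain' fun l l' => l.1 ≠ l'.1) :
      GT s x p (lH t₁ n₁ :: r)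

lemma lG_snd_ne_one {n : ℤ} (hn : n ≠ 0) (q : Vtx k) :
    (lG q n).2 ≠ (1 : Multiplicative ℤ) := by simpa [lG] using hn

lemma lH_snd_ne_one {n : ℤ} (hn : n ≠ 0) (t : Bool) :
    (lH (k := k) t n).2 ≠ (1 : Multiplicative ℤ) := by simpa [lH] using hn

lemma lG_fst_ne {q q' : Vtx k} (h : q ≠ q') (n n' : ℤ) : (lG q n).1 ≠ (lG q' n').1 := by
  simpa [lG] using h

lemma lG_lH_fst_ne (q : Vtx k) (t : Bool) (n n' : ℤ) :
    (lG q n).1 ≠ (lH (k := k) t n').1 := by simp [lG, lH]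

lemma lH_lG_fst_ne (q : Vtx k) (t : Bool) (n n' : ℤ) :
    (lH (k := k) t n').1 ≠ (lG q n).1 := by simp [lG, lH]

lemma GT_valid {s : Fin k → ℕ} {x : ℕ} {p : Vtx k} {t : List (Letter k)} (h : GT s x p t) :
    (∀ l ∈ (lG p 1 :: t), l.2 ≠ (1 : Multiplicative ℤ)) ∧
      (lG p 1 :: t).Chain' (fun l l' => l.1 ≠ l'.1) := by
  induction h with
  | dnil p q j hq hpj hz =>
    have hpq : p ≠ q := by
      intro h; apply absurd (congrArg Fin.val h); omega
    constructor
    · rintro l hl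
      rcases List.mem_cons.1 hl with rfl | hl
      · exact lG_snd_ne_one one_ne_zero p
      · rcases List.mem_singleton.1 hl with rfl
        exact lG_snd_ne_one (by norm_num) q
    · exact List.isChain_pair.2 (lG_fst_ne hpq 1 (-1))
  | dcons p q p' t hqp hqp' h ih =>
    obtain ⟨ih1, ih2⟩ := ih
    constructor
    · rintro l hl
      rcases List.mem_cons.1 hl with rfl | hl
      · exact lG_snd_ne_one one_ne_zero p
      rcases List.mem_cons.1 hl with rfl | hl
      · exact lG_snd_ne_one (by norm_num) q
      · exact ih1 l hl
    · refine List.IsChain.cons_cons (lG_fst_ne (Ne.symm hqp) 1 (-1)) ?_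
      exact List.IsChain.cons_cons (lG_fst_ne hqp' (-1) 1) ih2
  | hb p t₁ n₁ r hl hr1 hr2 =>
    constructor
    · rintro l hl'
      rcases List.mem_cons.1 hl' with rfl | hl'
      · exact lG_snd_ne_one one_ne_zero p
      rcases List.mem_cons.1 hl' with rfl | hl'
      · exact lH_snd_ne_one hl.1 t₁
      · exact hr1 l hl'
    · exact List.IsChain.cons_cons (lG_lH_fst_ne p t₁ 1 n₁) hr2


lemma oG_cancel (q : Vtx k) (z : CoprodI (Mfam k)) : oG q (-1) * (oG q 1 * z) = z := by
  rw [← mul_assoc, oE_add]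
  norm_num [oE_zero]

lemma oG_cancel' (q : Vtx k) (z : CoprodI (Mfam k)) : oG q 1 * (oG q (-1) * z) = z := by
  rw [← mul_assoc, oE_add]
  norm_num [oE_zero]

lemma oH_merge (t : Bool) (m n : ℤ) (z : CoprodI (Mfam k)) :
    oH t m * (oH t n * z) = oH t (m + n) * z := by
  rw [← mul_assoc, oE_add]

section Step

variable {s : Fin k → ℕ} {x : ℕ}

lemma step_v (pe qe : Vtx k) (hV1 : (qe : ℕ) = (pe : ℕ) + 1)
    (hV2 : ∀ t n, Ledger s x qe t n → Ledger s x pe t n)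
    (hV3 : k + 1 ≤ (qe : ℕ) → k + 1 ≤ (pe : ℕ))
    {p : Vtx k} {t : List (Letter k)} (h : GT s x p t) :
    ∃ p' t', GT s x p' t' ∧
      vl (lG p' 1 :: t') = oG pe 1 * (oG qe (-1) * vl (lG p 1 :: t)) := by
  by_cases hqp : qe = p
  · subst hqp
    cases h with
    | dnil p q j hq hpj hz =>
      refine ⟨pe, [lG q (-1)], ?_, ?_⟩
      · refine GT.dnil pe q j hq (by omega) ?_
        rcases hz with hz | hz
        · exact Or.inl hz
        · exact Or.inr (hV3 (by omega))
      · simp only [vl_cons, vl_nil, of_lG, mul_one, mul_assoc]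
        rw [oG_cancel]
    | dcons p q p' t hqp2 hqp' hin =>
      by_cases hqpe : q = pe
      · subst hqpe
        refine ⟨p', t, hin, ?_⟩
        simp only [vl_cons, vl_nil, of_lG, mul_one, mul_assoc]
        rw [oG_cancel, oG_cancel']
      · refine ⟨pe, lG q (-1) :: lG p' 1 :: t, GT.dcons pe q p' t hqpe hqp' hin, ?_⟩
        simp only [vl_cons, vl_nil, of_lG, mul_one, mul_assoc]
        rw [oG_cancel]
    | hb p t₁ n₁ r hl hr1 hr2 =>
      refine ⟨pe, lH t₁ n₁ :: r, GT.hb pe t₁ n₁ r (hV2 t₁ n₁ hl) hr1 hr2, ?_⟩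
      simp only [vl_cons, vl_nil, of_lG, of_lH, mul_one, mul_assoc]
      rw [oG_cancel]
  · have hqpe : qe ≠ pe := by
      intro hh; apply absurd (congrArg Fin.val hh); omega
    refine ⟨pe, lG qe (-1) :: lG p 1 :: t, GT.dcons pe qe p t hqpe hqp h, ?_⟩
    simp only [vl_cons, vl_nil, of_lG, mul_one, mul_assoc]

lemma step_u (pe qe : Vtx k) (tb : Bool) (m : ℤ) (hm : m ≠ 0)
    (hU1 : Ledger s x pe tb m)
    (hU2 : ∀ t n, Ledger s x qe t n →
      (t = tb ∧ Ledger s x pe tb (m + n)) ∨ (t ≠ tb ∧ Ledger s x pe tb m))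
    {p : Vtx k} {t : List (Letter k)} (h : GT s x p t) :
    ∃ p' t', GT s x p' t' ∧
      vl (lG p' 1 :: t') = oG pe 1 * (oH tb m * (oG qe (-1) * vl (lG p 1 :: t))) := by
  by_cases hqp : qe = p
  · subst hqp
    cases h with
    | dnil p q j hq hpj hz =>
      refine ⟨pe, [lH tb m, lG q (-1)], ?_, ?_⟩
      · refine GT.hb pe tb m [lG q (-1)] hU1 ?_ ?_
        · rintro l hl
          rcases List.mem_singleton.1 hl with rfl
          exact lG_snd_ne_one (by norm_num) q
        · exact List.isChain_pair.2 (lH_lG_fst_ne q tb (-1) m)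
      · simp only [vl_cons, vl_nil, of_lG, of_lH, mul_one, mul_assoc]
        rw [oG_cancel]
    | dcons p q p' t hqp2 hqp' hin =>
      obtain ⟨hv1, hv2⟩ := GT_valid hin
      refine ⟨pe, lH tb m :: lG q (-1) :: lG p' 1 :: t, ?_, ?_⟩
      · refine GT.hb pe tb m _ hU1 ?_ ?_
        · rintro l hl
          rcases List.mem_cons.1 hl with rfl | hl
          · exact lG_snd_ne_one (by norm_num) q
          · exact hv1 l hl
        · exact List.IsChain.cons_cons (lH_lG_fst_ne q tb (-1) m).symm.symm
            (List.IsChain.cons_cons (lG_fst_ne hqp' (-1) 1) hv2)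
      · simp only [vl_cons, vl_nil, of_lG, of_lH, mul_one, mul_assoc]
        rw [oG_cancel]
    | hb p t₁ n₁ r hl hr1 hr2 =>
      rcases hU2 t₁ n₁ hl with ⟨rfl, hled⟩ | ⟨hne, hled⟩
      · refine ⟨pe, lH t₁ (m + n₁) :: r, ?_, ?_⟩
        · refine GT.hb pe t₁ (m + n₁) r hled hr1 ?_
          obtain ⟨h1, h2⟩ := List.isChain_cons.1 hr2
          exact List.isChain_cons.2 ⟨fun y hy => h1 y hy, h2⟩
        · simp only [vl_cons, vl_nil, of_lG, of_lH, mul_one, mul_assoc]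
          rw [oG_cancel, oH_merge]
      · refine ⟨pe, lH tb m :: lH t₁ n₁ :: r, ?_, ?_⟩
        · refine GT.hb pe tb m _ hled ?_ ?_
          · rintro l hml
            rcases List.mem_cons.1 hml with rfl | hml
            · exact lH_snd_ne_one hl.1 t₁
            · exact hr1 l hml
          · refine List.IsChain.cons_cons ?_ hr2
            simpa [lH] using fun hh => hne (hh.symm)
        · simp only [vl_cons, vl_nil, of_lG, of_lH, mul_one, mul_assoc]
          rw [oG_cancel]
  · obtain ⟨hv1, hv2⟩ := GT_valid h
    refine ⟨pe, lH tb m :: lG qe (-1) :: lG p 1 :: t, ?_, ?_⟩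
    · refine GT.hb pe tb m _ hU1 ?_ ?_
      · rintro l hl
        rcases List.mem_cons.1 hl with rfl | hl
        · exact lG_snd_ne_one (by norm_num) qe
        · exact hv1 l hl
      · exact List.IsChain.cons_cons (lH_lG_fst_ne qe tb (-1) m)
          (List.IsChain.cons_cons (lG_fst_ne hqp (-1) 1) hv2)
    · simp only [vl_cons, vl_nil, of_lG, of_lH, mul_one, mul_assoc]

end Step

section Edges

variable {s : Fin k → ℕ} {x : ℕ}
lemma cast_sum_ne (H : ∀ U : Finset (Fin k), ∑ i ∈ U, s i ≠ x) (U : Finset (Fin k)) : (∑ i ∈ U, (s i : ℤ)) ≠ (x : ℤ) := by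
  rw [← Nat.cast_sum]
  exact_mod_cast H U

lemma sum_pos_of_mem (hs : ∀ i, 0 < s i) {U : Finset (Fin k)} {i : Fin k} (hi : i ∈ U) :
    0 < ∑ j ∈ U, (s j : ℤ) := by
  have h1 : (s i : ℤ) ≤ ∑ j ∈ U, (s j : ℤ) :=
    Finset.single_le_sum (f := fun j => (s j : ℤ)) (fun j _ => by positivity) hi
  have := hs i
  omega

/-- fresh ledger for `u_i` -/
lemma L1u (hs : ∀ i, 0 < s i) (i : Fin k) : Ledger s x (esrc k (Sum.inl i)) false ((s i : ℤ)) := by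
  have hik := i.isLt
  have hsi := hs i
  refine ⟨by omega, false, {i}, by simp, ?_⟩
  simp only [cond]
  constructor
  · simp only [esrc]; omega
  · intro j hj
    rcases Finset.mem_singleton.1 hj with rfl
    simp [esrc]

lemma L2u (hs : ∀ i, 0 < s i) (H : ∀ U : Finset (Fin k), ∑ i ∈ U, s i ≠ x) (i : Fin k) : ∀ tt n, Ledger s x (etgt k (Sum.inl i)) tt n →
    (tt = false ∧ Ledger s x (esrc k (Sum.inl i)) false ((s i : ℤ) + n)) ∨
      (tt ≠ false ∧ Ledger s x (esrc k (Sum.inl i)) false ((s i : ℤ))) := by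
  rintro tt n ⟨hn, c, U, hsum, hcond⟩
  have hik := i.isLt
  have hsi := hs i
  cases tt
  · left
    simp only [cond, etgt] at hcond
    have hiU : i ∉ U := by
      intro hmem
      have := hcond.2 i hmem
      omega
    have hsum' : (∑ j ∈ insert i U, (s j : ℤ)) = (s i : ℤ) + ∑ j ∈ U, (s j : ℤ) :=
      Finset.sum_insert hiU
    refine ⟨rfl, ?_, c, insert i U, ?_, ?_⟩
    · -- nonzero
      cases c
      · simp only [cond] at hsum ⊢
        have : 0 ≤ ∑ j ∈ U, (s j : ℤ) := Finset.sum_nonneg (fun j _ => by positivity)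
        omega
      · simp only [cond] at hsum
        have := cast_sum_ne H (insert i U)
        omega
    · omega
    · simp only [cond, esrc]
      constructor
      · omega
      · intro j hj
        rcases Finset.mem_insert.1 hj with rfl | hj
        · omega
        · have := hcond.2 j hj
          simp [etgt] at this
          omega
  · -- impossible: b-zone at vertex i+1 ≤ k
    exfalso
    simp only [cond, etgt] at hcond
    omega

/-- fresh ledger for `u'_i` -/
lemma L1u' (hs : ∀ i, 0 < s i) (i : Fin k) : Ledger s x (esrc k (Sum.inr (Sum.inr (Sum.inl i)))) true ((s i : ℤ)) := by
  have hik := i.isLt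
  have hsi := hs i
  refine ⟨by omega, false, {i}, by simp, ?_⟩
  simp only [cond]
  constructor
  · simp only [esrc]; omega
  · intro j hj
    rcases Finset.mem_singleton.1 hj with rfl
    simp [esrc]

lemma L2u' (hs : ∀ i, 0 < s i) (H : ∀ U : Finset (Fin k), ∑ i ∈ U, s i ≠ x) (i : Fin k) : ∀ tt n, Ledger s x (etgt k (Sum.inr (Sum.inr (Sum.inl i)))) tt n →
    (tt = true ∧ Ledger s x (esrc k (Sum.inr (Sum.inr (Sum.inl i)))) true ((s i : ℤ) + n)) ∨
      (tt ≠ true ∧ Ledger s x (esrc k (Sum.inr (Sum.inr (Sum.inl i)))) true ((s i : ℤ))) := by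
  rintro tt n ⟨hn, c, U, hsum, hcond⟩
  have hik := i.isLt
  have hsi := hs i
  cases tt
  · exfalso
    simp only [cond, etgt] at hcond
    omega
  · left
    simp only [cond, etgt] at hcond
    have hiU : i ∉ U := by
      intro hmem
      have := hcond.2 i hmem
      omega
    have hsum' : (∑ j ∈ insert i U, (s j : ℤ)) = (s i : ℤ) + ∑ j ∈ U, (s j : ℤ) :=
      Finset.sum_insert hiU
    refine ⟨rfl, ?_, c, insert i U, ?_, ?_⟩
    · cases c
      · simp only [cond] at hsum ⊢
        have : 0 ≤ ∑ j ∈ U, (s j : ℤ) := Finset.sum_nonneg (fun j _ => by positivity)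
        omega
      · simp only [cond] at hsum
        have := cast_sum_ne H (insert i U)
        omega
    · omega
    · simp only [cond, esrc]
      constructor
      · omega
      · intro j hj
        rcases Finset.mem_insert.1 hj with rfl | hj
        · omega
        · have := hcond.2 j hj
          omega

/-- fresh ledger for `c` -/
lemma L1c (hx : 0 < x) : Ledger s x (esrc k (Sum.inr (Sum.inr (Sum.inr (Sum.inr false))))) false (-(x : ℤ)) := by
  refine ⟨by omega, true, ∅, by simp, ?_⟩
  simp only [cond]
  exact ⟨by simp [esrc], by simp⟩

lemma L2c (hx : 0 < x) : ∀ tt n, Ledger s x (etgt k (Sum.inr (Sum.inr (Sum.inr (Sum.inr false))))) tt n →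
    (tt = false ∧ Ledger s x (esrc k (Sum.inr (Sum.inr (Sum.inr (Sum.inr false))))) false ((-(x : ℤ)) + n)) ∨
      (tt ≠ false ∧ Ledger s x (esrc k (Sum.inr (Sum.inr (Sum.inr (Sum.inr false))))) false (-(x : ℤ))) := by
  rintro tt n ⟨hn, c, U, hsum, hcond⟩
  cases tt
  · exfalso
    simp only [cond, etgt] at hcond
    omega
  · exact Or.inr ⟨by simp, L1c hx⟩

/-- fresh ledger for `d` -/
lemma L1d (hx : 0 < x) : Ledger s x (esrc k (Sum.inr (Sum.inr (Sum.inr (Sum.inr true))))) true (-(x : ℤ)) := by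
  refine ⟨by omega, true, ∅, by simp, ?_⟩
  simp only [cond]
  exact ⟨by simp [esrc]; omega, by simp⟩

lemma L2d (hx : 0 < x) : ∀ tt n, Ledger s x (etgt k (Sum.inr (Sum.inr (Sum.inr (Sum.inr true))))) tt n →
    (tt = true ∧ Ledger s x (esrc k (Sum.inr (Sum.inr (Sum.inr (Sum.inr true))))) true ((-(x : ℤ)) + n)) ∨
      (tt ≠ true ∧ Ledger s x (esrc k (Sum.inr (Sum.inr (Sum.inr (Sum.inr true))))) true (-(x : ℤ))) := by
  rintro tt n ⟨hn, c, U, hsum, hcond⟩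
  cases tt
  · exact Or.inr ⟨by simp, L1d hx⟩
  · exfalso
    simp only [cond, etgt] at hcond
    omega

/-- ledger relaxation for `v_i` -/
lemma LV (i : Fin k) : ∀ tt n, Ledger s x (etgt k (Sum.inr (Sum.inl i))) tt n →
    Ledger s x (esrc k (Sum.inr (Sum.inl i))) tt n := by
  rintro tt n ⟨hn, c, U, hsum, hcond⟩
  have hik := i.isLt
  refine ⟨hn, c, U, hsum, ?_⟩
  cases tt
  · simp only [cond, etgt, esrc] at hcond ⊢
    exact ⟨by omega, fun j hj => by have := hcond.2 j hj; omega⟩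
  · exfalso
    simp only [cond, etgt] at hcond
    omega

lemma LV' (i : Fin k) : ∀ tt n, Ledger s x (etgt k (Sum.inr (Sum.inr (Sum.inr (Sum.inl i))))) tt n →
    Ledger s x (esrc k (Sum.inr (Sum.inr (Sum.inr (Sum.inl i))))) tt n := by
  rintro tt n ⟨hn, c, U, hsum, hcond⟩
  have hik := i.isLt
  refine ⟨hn, c, U, hsum, ?_⟩
  cases tt
  · exfalso
    simp only [cond, etgt] at hcond
    omega
  · simp only [cond, etgt, esrc] at hcond ⊢
    exact ⟨by omega, fun j hj => by have := hcond.2 j hj; omega⟩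

end Edges

section Dispatch

variable {s : Fin k → ℕ} {x : ℕ}

lemma stepAll (hs : ∀ i, 0 < s i) (hx : 0 < x)
    (H : ∀ U : Finset (Fin k), ∑ i ∈ U, s i ≠ x) (e : Widx k)
    {p : Vtx k} {t : List (Letter k)} (h : GT s x p t) :
    ∃ p' t', GT s x p' t' ∧
      vl (lG p' 1 :: t') = φ k (Wfam s x e) * vl (lG p 1 :: t) := by
  rw [φ_Wfam]
  rcases e with i | i | i | i | b
  · have hm : ((s i : ℤ)) ≠ 0 := by have := hs i; omega
    have := step_u (esrc k (Sum.inl i)) (etgt k (Sum.inl i)) false ((s i : ℤ))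
      hm (L1u hs i) (L2u hs H i) h
    simpa only [etyp, eexp, mul_assoc] using this
  · have hik := i.isLt
    have := step_v (esrc k (Sum.inr (Sum.inl i))) (etgt k (Sum.inr (Sum.inl i)))
      (by simp only [esrc, etgt]) (LV i)
      (by simp only [esrc, etgt]; omega) h
    simpa only [etyp, eexp, oH, oE_zero, mul_one, one_mul, mul_assoc] using this
  · have hm : ((s i : ℤ)) ≠ 0 := by have := hs i; omega
    have := step_u (esrc k (Sum.inr (Sum.inr (Sum.inl i)))) (etgt k (Sum.inr (Sum.inr (Sum.inl i)))) true ((s i : ℤ))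
      hm (L1u' hs i) (L2u' hs H i) h
    simpa only [etyp, eexp, mul_assoc] using this
  · have hik := i.isLt
    have := step_v (esrc k (Sum.inr (Sum.inr (Sum.inr (Sum.inl i))))) (etgt k (Sum.inr (Sum.inr (Sum.inr (Sum.inl i)))))
      (by simp only [esrc, etgt]) (LV' i)
      (by simp only [esrc, etgt]; omega) h
    simpa only [etyp, eexp, oH, oE_zero, mul_one, one_mul, mul_assoc] using this
  · have hm : (-(x : ℤ)) ≠ 0 := by omega
    cases b
    · have := step_u (esrc k (Sum.inr (Sum.inr (Sum.inr (Sum.inr false)))))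
        (etgt k (Sum.inr (Sum.inr (Sum.inr (Sum.inr false))))) false (-(x : ℤ))
        hm (L1c hx) (L2c hx) h
      simpa only [etyp, eexp, mul_assoc] using this
    · have := step_u (esrc k (Sum.inr (Sum.inr (Sum.inr (Sum.inr true)))))
        (etgt k (Sum.inr (Sum.inr (Sum.inr (Sum.inr true))))) true (-(x : ℤ))
        hm (L1d hx) (L2d hx) h
      simpa only [etyp, eexp, mul_assoc] using this

lemma base_u (pe qe : Vtx k) (tb : Bool) (m : ℤ) (hm : m ≠ 0)
    (hU1 : Ledger s x pe tb m) :
    ∃ p t, GT s x p t ∧ vl (lG p 1 :: t) = oG pe 1 * (oH tb m * oG qe (-1)) := by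
  refine ⟨pe, [lH tb m, lG qe (-1)], ?_, ?_⟩
  · refine GT.hb pe tb m [lG qe (-1)] hU1 ?_ ?_
    · rintro l hl
      rcases List.mem_singleton.1 hl with rfl
      exact lG_snd_ne_one (by norm_num) qe
    · exact List.isChain_pair.2 (lH_lG_fst_ne qe tb (-1) m)
  · simp only [vl_cons, vl_nil, of_lG, of_lH, mul_one, mul_assoc]

lemma base_v (pe qe : Vtx k) (hV1 : (qe : ℕ) = (pe : ℕ) + 1)
    (hz : (pe : ℕ) < k ∨ k + 1 ≤ (pe : ℕ)) :
    ∃ p t, GT s x p t ∧ vl (lG p 1 :: t) = oG pe 1 * oG qe (-1) := by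
  refine ⟨pe, [lG qe (-1)], GT.dnil pe qe (pe : ℕ) hV1 le_rfl hz, ?_⟩
  simp only [vl_cons, vl_nil, of_lG, mul_one]

lemma baseAll (hs : ∀ i, 0 < s i) (hx : 0 < x) (e : Widx k) :
    ∃ p t, GT s x p t ∧ vl (lG p 1 :: t) = φ k (Wfam s x e) := by
  rw [φ_Wfam]
  rcases e with i | i | i | i | b
  · have hm : ((s i : ℤ)) ≠ 0 := by have := hs i; omega
    simpa only [etyp, eexp, mul_assoc] using
      base_u (esrc k (Sum.inl i)) (etgt k (Sum.inl i)) false ((s i : ℤ)) hm (L1u hs i)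
  · have hik := i.isLt
    simpa only [etyp, eexp, oH, oE_zero, mul_one, one_mul, mul_assoc] using
      base_v (x := x) (esrc k (Sum.inr (Sum.inl i))) (etgt k (Sum.inr (Sum.inl i)))
        (by simp only [esrc, etgt]) (by simp only [esrc]; omega)
  · have hm : ((s i : ℤ)) ≠ 0 := by have := hs i; omega
    simpa only [etyp, eexp, mul_assoc] using
      base_u (esrc k (Sum.inr (Sum.inr (Sum.inl i)))) (etgt k (Sum.inr (Sum.inr (Sum.inl i))))
        true ((s i : ℤ)) hm (L1u' hs i)
  · have hik := i.isLt
    simpa only [etyp, eexp, oH, oE_zero, mul_one, one_mul, mul_assoc] using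
      base_v (x := x) (esrc k (Sum.inr (Sum.inr (Sum.inr (Sum.inl i)))))
        (etgt k (Sum.inr (Sum.inr (Sum.inr (Sum.inl i)))))
        (by simp only [esrc, etgt]) (by simp only [esrc]; omega)
  · have hm : (-(x : ℤ)) ≠ 0 := by omega
    cases b
    · simpa only [etyp, eexp, mul_assoc] using
        base_u (esrc k (Sum.inr (Sum.inr (Sum.inr (Sum.inr false)))))
          (etgt k (Sum.inr (Sum.inr (Sum.inr (Sum.inr false))))) false (-(x : ℤ)) hm (L1c hx)
    · simpa only [etyp, eexp, mul_assoc] using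
        base_u (esrc k (Sum.inr (Sum.inr (Sum.inr (Sum.inr true)))))
          (etgt k (Sum.inr (Sum.inr (Sum.inr (Sum.inr true))))) true (-(x : ℤ)) hm (L1d hx)

lemma forward (hs : ∀ i, 0 < s i) (hx : 0 < x)
    (H : ∀ U : Finset (Fin k), ∑ i ∈ U, s i ≠ x) :
    ∀ l : List (Widx k), l ≠ [] →
      ∃ p t, GT s x p t ∧ φ k ((l.map (Wfam s x)).prod) = vl (lG p 1 :: t) := by
  intro l
  induction l with
  | nil => intro h; exact absurd rfl h
  | cons e l ih =>
    intro _
    rcases eq_or_ne l [] with rfl | hl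
    · obtain ⟨p, t, hgt, hv⟩ := baseAll (x := x) hs hx e
      refine ⟨p, t, hgt, ?_⟩
      simpa using hv.symm
    · obtain ⟨p, t, hgt, hv⟩ := ih hl
      obtain ⟨p', t', hgt', hv'⟩ := stepAll hs hx H e hgt
      refine ⟨p', t', hgt', ?_⟩
      rw [List.map_cons, List.prod_cons, map_mul, hv', hv]

lemma main_forward (hs : ∀ i, 0 < s i) (hx : 0 < x)
    (H : ∀ U : Finset (Fin k), ∑ i ∈ U, s i ≠ x)
    (l : List (Widx k)) (hl : l ≠ []) (hprod : (l.map (Wfam s x)).prod = 1) : False := by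
  obtain ⟨p, t, hgt, hv⟩ := forward hs hx H l hl
  rw [hprod, map_one] at hv
  obtain ⟨h1, h2⟩ := GT_valid hgt
  let w : CoprodI.Word (Mfam k) := ⟨lG p 1 :: t, h1, h2⟩
  have hw : w.prod = 1 := by
    have hwp : w.prod = vl (lG p 1 :: t) := rfl
    rw [hwp, ← hv]
  have hemp : w = CoprodI.Word.empty := by
    apply (CoprodI.Word.equiv (M := Mfam k)).symm.injective
    show w.prod = CoprodI.Word.empty.prod
    rw [hw, CoprodI.Word.prod_empty]
  have : (lG p 1 :: t) = ([] : List (Letter k)) := congrArg CoprodI.Word.toList hemp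
  exact absurd this (by simp)

end Dispatch

section Backward

variable {s : Fin k → ℕ} {x : ℕ} (U : Finset (Fin k))

/-- partial subset sums -/
def Sj (s : Fin k → ℕ) (U : Finset (Fin k)) (j : ℕ) : ℕ :=
  ∑ i ∈ U, if (i : ℕ) < j then s i else 0

lemma Sj_succ (j : ℕ) (hj : j < k) :
    Sj s U (j + 1) = Sj s U j + (if (⟨j, hj⟩ : Fin k) ∈ U then s ⟨j, hj⟩ else 0) := by
  classical
  have hpt : ∀ i ∈ U, (if (i : ℕ) < j + 1 then s i else 0) =
      (if (i : ℕ) < j then s i else 0) + (if i = ⟨j, hj⟩ then s i else 0) := by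
    intro i _
    by_cases h2 : i = ⟨j, hj⟩
    · have hv : (i : ℕ) = j := by rw [h2]
      rw [if_pos (by omega), if_neg (by omega), if_pos h2, zero_add]
    · have hv : (i : ℕ) ≠ j := fun hh => h2 (Fin.ext hh)
      by_cases h1 : (i : ℕ) < j
      · rw [if_pos (by omega), if_pos h1, if_neg h2, add_zero]
      · rw [if_neg (by omega), if_neg h1, if_neg h2, add_zero]
  rw [Sj, Finset.sum_congr rfl hpt, Finset.sum_add_distrib, Sj]
  congr 1
  exact Finset.sum_ite_eq' U ⟨j, hj⟩ s

lemma Sj_k : Sj s U k = ∑ i ∈ U, s i := by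
  refine Finset.sum_congr rfl fun i _ => ?_
  rw [if_pos i.isLt]

lemma buildA : ∀ j, (hj : j ≤ k) → ∃ L : List (Widx k),
    (L.map (Wfam s x)).prod =
      gGen ⟨0, by omega⟩ * aGen ^ (Sj s U j) * (gGen (⟨j, by omega⟩ : Vtx k))⁻¹ := by
  intro j
  induction j with
  | zero =>
    intro _
    refine ⟨[], ?_⟩
    simp [Sj]
  | succ j ih =>
    intro hj
    obtain ⟨L, hL⟩ := ih (by omega)
    have hjk : j < k := by omega
    by_cases hmem : (⟨j, hjk⟩ : Fin k) ∈ U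
    · refine ⟨L ++ [Sum.inl ⟨j, hjk⟩], ?_⟩
      rw [List.map_append, List.prod_append, hL]
      simp only [List.map_cons, List.map_nil, List.prod_cons, List.prod_nil, mul_one]
      show _ * (Wfam s x (Sum.inl ⟨j, hjk⟩)) = _
      simp only [Wfam]
      rw [Sj_succ U j hjk, if_pos hmem, pow_add]
      group
    · refine ⟨L ++ [Sum.inr (Sum.inl ⟨j, hjk⟩)], ?_⟩
      rw [List.map_append, List.prod_append, hL]
      simp only [List.map_cons, List.map_nil, List.prod_cons, List.prod_nil, mul_one]
      show _ * (Wfam s x (Sum.inr (Sum.inl ⟨j, hjk⟩))) = _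
      simp only [Wfam]
      rw [Sj_succ U j hjk, if_neg hmem, add_zero]
      group

lemma buildB : ∀ j, (hj : j ≤ k) → ∃ L : List (Widx k),
    (L.map (Wfam s x)).prod =
      gGen ⟨k + 1, by omega⟩ * bGen ^ (Sj s U j) * (gGen (⟨k + 1 + j, by omega⟩ : Vtx k))⁻¹ := by
  intro j
  induction j with
  | zero =>
    intro _
    refine ⟨[], ?_⟩
    simp [Sj]
  | succ j ih =>
    intro hj
    obtain ⟨L, hL⟩ := ih (by omega)
    have hjk : j < k := by omega
    have e1 : (⟨k + (j : ℕ) + 1, by omega⟩ : Vtx k) = ⟨k + 1 + j, by omega⟩ := by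
      apply Fin.ext; simp; omega
    have e2 : (⟨k + (j : ℕ) + 2, by omega⟩ : Vtx k) = ⟨k + 1 + (j + 1), by omega⟩ := by
      apply Fin.ext; simp; omega
    by_cases hmem : (⟨j, hjk⟩ : Fin k) ∈ U
    · refine ⟨L ++ [Sum.inr (Sum.inr (Sum.inl ⟨j, hjk⟩))], ?_⟩
      rw [List.map_append, List.prod_append, hL]
      simp only [List.map_cons, List.map_nil, List.prod_cons, List.prod_nil, mul_one]
      show _ * (Wfam s x (Sum.inr (Sum.inr (Sum.inl ⟨j, hjk⟩)))) = _
      simp only [Wfam]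
      rw [Sj_succ U j hjk, if_pos hmem, pow_add, e1, e2]
      group
    · refine ⟨L ++ [Sum.inr (Sum.inr (Sum.inr (Sum.inl ⟨j, hjk⟩)))], ?_⟩
      rw [List.map_append, List.prod_append, hL]
      simp only [List.map_cons, List.map_nil, List.prod_cons, List.prod_nil, mul_one]
      show _ * (Wfam s x (Sum.inr (Sum.inr (Sum.inr (Sum.inl ⟨j, hjk⟩))))) = _
      simp only [Wfam]
      rw [Sj_succ U j hjk, if_neg hmem, add_zero, e1, e2]
      group

lemma main_backward (hU : ∑ i ∈ U, s i = x) :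
    ∃ l : List (Widx k), l ≠ [] ∧ (l.map (Wfam s x)).prod = 1 := by
  obtain ⟨LA, hLA⟩ := buildA (s := s) (x := x) U k le_rfl
  obtain ⟨LB, hLB⟩ := buildB (s := s) (x := x) U k le_rfl
  rw [Sj_k U, hU] at hLA hLB
  refine ⟨LA ++ [Sum.inr (Sum.inr (Sum.inr (Sum.inr false)))] ++ LB ++
    [Sum.inr (Sum.inr (Sum.inr (Sum.inr true)))], by simp, ?_⟩
  have e3 : (⟨k + 1 + k, by omega⟩ : Vtx k) = ⟨2 * k + 1, by omega⟩ := by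
    apply Fin.ext; simp; omega
  rw [e3] at hLB
  simp only [List.map_append, List.prod_append, hLA, hLB, List.map_cons, List.map_nil,
    List.prod_cons, List.prod_nil, mul_one]
  simp only [Wfam]
  group

end Backward

end SSAux


/-- Some nonempty product of members of the family `W` equals the identity of `F`
iff the subset sum instance `(s₁,…,s_k; x)` has a solution. -/
theorem identity_in_semigroup_iff_subset_sum (k : ℕ) (hk : 1 ≤ k)
    (s : Fin k → ℕ) (hs : ∀ i, 0 < s i) (x : ℕ) (hx : 0 < x) :
    (∃ l : List (Widx k), l ≠ [] ∧ (l.map (Wfam s x)).prod = 1) ↔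
      (∃ U : Finset (Fin k), ∑ i ∈ U, s i = x) := by
  constructor
  · rintro ⟨l, hl, hprod⟩
    by_contra hU
    push_neg at hU
    exact SSAux.main_forward hs hx hU l hl hprod
  · rintro ⟨U, hU⟩
    exact SSAux.main_backward U hU
end

section
/- There exists an element of the subsemigroup of F generated by the family W (i.e., an element equal to some product of a nonempty finite sequence of members of W) that has infinitely many distinct factorizations over W if and only if there exists a subset U ⊆ {1,…,k} with ∑_{i∈U} s_i = x. -/
namespace SSFG

variable {k : ℕ}

/-- letter type -/
abbrev Lam (k : ℕ) := (Fin (2 * k + 2) ⊕ Bool) × Bool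

def srcN : Widx k → ℕ
  | Sum.inl i => i
  | Sum.inr (Sum.inl i) => i
  | Sum.inr (Sum.inr (Sum.inl i)) => k + i + 1
  | Sum.inr (Sum.inr (Sum.inr (Sum.inl i))) => k + i + 1
  | Sum.inr (Sum.inr (Sum.inr (Sum.inr false))) => k
  | Sum.inr (Sum.inr (Sum.inr (Sum.inr true))) => 2 * k + 1

def tgtN : Widx k → ℕ
  | Sum.inl i => i + 1
  | Sum.inr (Sum.inl i) => i + 1
  | Sum.inr (Sum.inr (Sum.inl i)) => k + i + 2
  | Sum.inr (Sum.inr (Sum.inr (Sum.inl i))) => k + i + 2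
  | Sum.inr (Sum.inr (Sum.inr (Sum.inr false))) => k + 1
  | Sum.inr (Sum.inr (Sum.inr (Sum.inr true))) => 0

def sideW : Widx k → Bool
  | Sum.inl _ => false
  | Sum.inr (Sum.inl _) => false
  | Sum.inr (Sum.inr (Sum.inl _)) => true
  | Sum.inr (Sum.inr (Sum.inr (Sum.inl _))) => true
  | Sum.inr (Sum.inr (Sum.inr (Sum.inr false))) => false
  | Sum.inr (Sum.inr (Sum.inr (Sum.inr true))) => true

def expW (s : Fin k → ℕ) (x : ℕ) : Widx k → ℤ
  | Sum.inl i => (s i : ℤ)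
  | Sum.inr (Sum.inl _) => 0
  | Sum.inr (Sum.inr (Sum.inl i)) => (s i : ℤ)
  | Sum.inr (Sum.inr (Sum.inr (Sum.inl _))) => 0
  | Sum.inr (Sum.inr (Sum.inr (Sum.inr false))) => -(x : ℤ)
  | Sum.inr (Sum.inr (Sum.inr (Sum.inr true))) => -(x : ℤ)

lemma srcN_lt (w : Widx k) : srcN w < 2 * k + 2 := by
  rcases w with i | i | i | i | (_ | _) <;> simp [srcN] <;> omega

lemma tgtN_lt (w : Widx k) : tgtN w < 2 * k + 2 := by
  rcases w with i | i | i | i | (_ | _) <;> simp [tgtN] <;> omega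

lemma srcN_ne_tgtN (w : Widx k) : srcN w ≠ tgtN w := by
  rcases w with i | i | i | i | (_ | _) <;> simp [srcN, tgtN] <;> omega

/-- the `Fin` made from a natural number -/
def fi (k p : ℕ) : Fin (2 * k + 2) := ⟨p % (2 * k + 2), Nat.mod_lt _ (by omega)⟩

lemma fi_eq (p : ℕ) (h : p < 2 * k + 2) : fi k p = ⟨p, h⟩ := by
  simp [fi, Nat.mod_eq_of_lt h]

lemma fi_inj {p q : ℕ} (hp : p < 2 * k + 2) (hq : q < 2 * k + 2) (h : fi k p = fi k q) :
    p = q := by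
  rw [fi_eq p hp, fi_eq q hq] at h
  simpa using h

def gp (k : ℕ) (p : ℕ) : Lam k := (Sum.inl (fi k p), true)
def gn (k : ℕ) (p : ℕ) : Lam k := (Sum.inl (fi k p), false)
def blk (k : ℕ) (c : Bool) (E : ℤ) : List (Lam k) :=
  List.replicate E.natAbs (Sum.inr c, decide (0 < E))

def gg (k p : ℕ) : Fgrp k := FreeGroup.of (Sum.inl (fi k p))
def zz (k : ℕ) (c : Bool) : Fgrp k := FreeGroup.of (Sum.inr c)

lemma mk_replicate_true (y : Fin (2 * k + 2) ⊕ Bool) (n : ℕ) :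
    (FreeGroup.mk (List.replicate n (y, true)) : Fgrp k) = FreeGroup.of y ^ n := by
  induction n with
  | zero => simp [← FreeGroup.one_eq_mk]
  | succ n ih =>
    rw [List.replicate_succ, show ((y, true) :: List.replicate n (y, true)) =
      [(y, true)] ++ List.replicate n (y, true) from rfl, ← FreeGroup.mul_mk, ih,
      pow_succ']
    rfl

lemma mk_replicate_false (y : Fin (2 * k + 2) ⊕ Bool) (n : ℕ) :
    (FreeGroup.mk (List.replicate n (y, false)) : Fgrp k) = FreeGroup.of y ^ (-(n : ℤ)) := by
  have h : (List.replicate n (y, false) : List (Lam k)) =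
      FreeGroup.invRev (List.replicate n (y, true)) := by
    simp [FreeGroup.invRev, List.map_replicate]
  rw [h, ← FreeGroup.inv_mk, mk_replicate_true, ← zpow_natCast, ← zpow_neg]

lemma mk_blk (c : Bool) (E : ℤ) :
    (FreeGroup.mk (blk k c E) : Fgrp k) = zz k c ^ E := by
  rcases le_or_gt 0 E with h | h
  · rcases Int.le.dest h with ⟨n, rfl⟩
    simp only [zero_add, blk]
    rcases n with _ | n
    · simp [← FreeGroup.one_eq_mk]
    · simp only [Int.natAbs_natCast]
      rw [show decide (0 < ((n + 1 : ℕ) : ℤ)) = true by simp]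
      rw [mk_replicate_true, zz, zpow_natCast]
  · have hd : decide (0 < E) = false := by simp; omega
    have ha : (E.natAbs : ℤ) = -E := by omega
    rw [blk, hd, mk_replicate_false, zz, ha, neg_neg]

/-! ### Reduced words -/

def NR (u v : Lam k) : Prop := ¬(u.1 = v.1 ∧ u.2 = !v.2)

def Reduced (L : List (Lam k)) : Prop := List.Chain' NR L

lemma reduce_eq_self {L : List (Lam k)} (h : Reduced L) : FreeGroup.reduce L = L := by
  induction L with
  | nil => rfl
  | cons xx L ih =>
    rw [FreeGroup.reduce.cons, ih h.tail]
    cases L with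
    | nil => rfl
    | cons y t =>
      exact if_neg (List.isChain_cons_cons.mp h).1

lemma toWord_of_reduced {L : List (Lam k)} (h : Reduced L) :
    (FreeGroup.mk L : Fgrp k).toWord = L := by
  rw [FreeGroup.toWord_mk, reduce_eq_self h]

lemma chain'_blk (c : Bool) (E : ℤ) : List.Chain' NR (blk k c E) := by
  unfold blk
  generalize E.natAbs = n
  induction n with
  | zero => exact List.isChain_nil
  | succ n ih =>
    rw [List.replicate_succ]
    refine List.isChain_cons.mpr ⟨?_, ih⟩
    intro y hy
    have : y = (Sum.inr c, decide (0 < E)) := by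
      have := List.mem_of_mem_head? hy
      exact List.eq_of_mem_replicate this
    subst this
    intro ⟨_, h2⟩
    simp at h2

lemma mem_blk {u : Lam k} {c : Bool} {E : ℤ} (h : u ∈ blk k c E) :
    u = (Sum.inr c, decide (0 < E)) := List.eq_of_mem_replicate h

lemma blk_zero (c : Bool) : blk k c 0 = [] := rfl

lemma length_blk (c : Bool) (E : ℤ) : (blk k c E).length = E.natAbs :=
  List.length_replicate ..

lemma blk_ne_nil {c : Bool} {E : ℤ} (h : E ≠ 0) : blk k c E ≠ [] := by
  unfold blk
  intro hcon
  have := congrArg List.length hcon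
  simp at this
  omega

lemma head?_blk {c : Bool} {E : ℤ} (h : E ≠ 0) :
    (blk k c E).head? = some (Sum.inr c, decide (0 < E)) := by
  unfold blk
  obtain ⟨n, hn⟩ : ∃ n, E.natAbs = n + 1 := ⟨E.natAbs - 1, by omega⟩
  rw [hn, List.replicate_succ]
  rfl

lemma NR_gp_gn {p q : ℕ} (hp : p < 2 * k + 2) (hq : q < 2 * k + 2) (hne : p ≠ q) :
    NR (gp k p) (gn k q) := by
  intro ⟨h1, _⟩
  exact hne (fi_inj hp hq (by simpa [gp, gn] using h1))

/-- The canonical state word. -/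
def stW (k : ℕ) (p : ℕ) (c : Bool) (E : ℤ) (T : List (Lam k)) : List (Lam k) :=
  gp k p :: (blk k c E ++ T)

lemma mk_stW (p : ℕ) (c : Bool) (E : ℤ) (T : List (Lam k)) :
    (FreeGroup.mk (stW k p c E T) : Fgrp k) = gg k p * zz k c ^ E * FreeGroup.mk T := by
  rw [stW, show (gp k p :: (blk k c E ++ T)) = [gp k p] ++ (blk k c E ++ T) from rfl,
    ← FreeGroup.mul_mk, ← FreeGroup.mul_mk, mk_blk, ← mul_assoc]
  rfl

lemma mk_gn_cons (q : ℕ) (T : List (Lam k)) :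
    (FreeGroup.mk (gn k q :: T) : Fgrp k) = (gg k q)⁻¹ * FreeGroup.mk T := by
  rw [show (gn k q :: T) = [gn k q] ++ T from rfl, ← FreeGroup.mul_mk]
  congr 1

lemma length_stW (p : ℕ) (c : Bool) (E : ℤ) (T : List (Lam k)) :
    (stW k p c E T).length = 1 + E.natAbs + T.length := by
  simp [stW, length_blk]; omega

/-- assembling reducedness of a state word -/
lemma reduced_stW {p : ℕ} {c : Bool} {E : ℤ} {T : List (Lam k)}
    (hT : List.Chain' NR T)
    (h3 : ∀ u ∈ T.head?, u.1 ≠ Sum.inr c)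
    (h4 : E = 0 → ∀ u ∈ T.head?, NR (gp k p) u) :
    Reduced (stW k p c E T) := by
  unfold Reduced stW
  refine List.isChain_cons.mpr ⟨?_, ?_⟩
  · intro y hy
    by_cases hE : E = 0
    · rw [hE, blk_zero] at hy
      exact h4 hE y hy
    · rw [List.head?_append_of_ne_nil _ (blk_ne_nil hE), head?_blk hE] at hy
      cases hy
      intro ⟨h1, _⟩
      simp [gp] at h1
  · refine List.isChain_append.mpr ⟨chain'_blk c E, hT, ?_⟩
    intro u hu v hv
    have hu' := mem_blk (List.mem_of_mem_getLast? hu)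
    subst hu'
    intro ⟨h1, _⟩
    exact h3 v hv h1.symm

/-! ### The group form of the generators -/

variable (s : Fin k → ℕ) (x : ℕ)

lemma Wfam_eq (w : Widx k) :
    Wfam s x w = gg k (srcN w) * zz k (sideW w) ^ expW s x w * (gg k (tgtN w))⁻¹ := by
  rcases w with i | i | i | i | (_ | _)
  · have h1 : (i : ℕ) < 2 * k + 2 := by have := i.isLt; omega
    have h2 : (i : ℕ) + 1 < 2 * k + 2 := by have := i.isLt; omega
    simp only [Wfam, srcN, tgtN, sideW, expW, gg, zz, gGen, aGen, fi_eq _ h1, fi_eq _ h2,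
      zpow_natCast]
  · have h1 : (i : ℕ) < 2 * k + 2 := by have := i.isLt; omega
    have h2 : (i : ℕ) + 1 < 2 * k + 2 := by have := i.isLt; omega
    simp only [Wfam, srcN, tgtN, sideW, expW, gg, zz, gGen, fi_eq _ h1, fi_eq _ h2, zpow_zero,
      mul_one]
  · have h1 : k + (i : ℕ) + 1 < 2 * k + 2 := by have := i.isLt; omega
    have h2 : k + (i : ℕ) + 2 < 2 * k + 2 := by have := i.isLt; omega
    simp only [Wfam, srcN, tgtN, sideW, expW, gg, zz, gGen, bGen, fi_eq _ h1, fi_eq _ h2,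
      zpow_natCast]
  · have h1 : k + (i : ℕ) + 1 < 2 * k + 2 := by have := i.isLt; omega
    have h2 : k + (i : ℕ) + 2 < 2 * k + 2 := by have := i.isLt; omega
    simp only [Wfam, srcN, tgtN, sideW, expW, gg, zz, gGen, fi_eq _ h1, fi_eq _ h2, zpow_zero,
      mul_one]
  · have h1 : k < 2 * k + 2 := by omega
    have h2 : k + 1 < 2 * k + 2 := by omega
    simp only [Wfam, srcN, tgtN, sideW, expW, gg, zz, gGen, aGen, fi_eq _ h1, fi_eq _ h2,
      zpow_neg, zpow_natCast]
  · have h1 : 2 * k + 1 < 2 * k + 2 := by omega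
    have h2 : (0 : ℕ) < 2 * k + 2 := by omega
    simp only [Wfam, srcN, tgtN, sideW, expW, gg, zz, gGen, bGen, fi_eq _ h1, fi_eq _ h2,
      zpow_neg, zpow_natCast]

/-! ### numeric gadgets -/

def side (k p : ℕ) : Bool := decide (k + 1 ≤ p)
def lowB (k p : ℕ) : ℕ := if p ≤ k then p else p - (k + 1)
def posN (k p : ℕ) : ℕ := 2 * k + 1 - p
def dead (E : ℤ) : ℤ := max 0 (-E - 1)

lemma sideW_eq (w : Widx k) : sideW w = side k (srcN w) := by
  rcases w with i | i | i | i | (_ | _)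
  · have := i.isLt
    simp only [sideW, srcN, side]
    symm; exact decide_eq_false (by omega)
  · have := i.isLt
    simp only [sideW, srcN, side]
    symm; exact decide_eq_false (by omega)
  · simp only [sideW, srcN, side]
    symm; exact decide_eq_true (by omega)
  · simp only [sideW, srcN, side]
    symm; exact decide_eq_true (by omega)
  · simp only [sideW, srcN, side]
    symm; exact decide_eq_false (by omega)
  · simp only [sideW, srcN, side]
    symm; exact decide_eq_true (by omega)

lemma dead_nonneg (E : ℤ) : 0 ≤ dead E := le_max_left _ _

lemma dead_le_natAbs (E : ℤ) : dead E ≤ (E.natAbs : ℤ) := by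
  simp only [dead]
  omega

lemma phi_mono (E e' : ℤ) (h1 : 0 ≤ e') (h2 : E + e' = 0 → e' = 0) :
    (E.natAbs : ℤ) - dead E ≤ ((E + e').natAbs : ℤ) - dead (E + e') := by
  rcases eq_or_ne (E + e') 0 with h | h
  · have := h2 h
    simp only [dead]
    omega
  · simp only [dead]
    omega

def Meas (k : ℕ) (E : ℤ) (tl : ℕ) (p : ℕ) : ℤ :=
  (2 * (k : ℤ) + 2) * (1 + (E.natAbs : ℤ) + tl - dead E) + posN k p

lemma posN_le (p : ℕ) : (posN k p : ℤ) ≤ 2 * (k : ℤ) + 1 := by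
  unfold posN; omega

lemma posN_nonneg (p : ℕ) : (0 : ℤ) ≤ (posN k p : ℤ) := by positivity

lemma Meas_le (n : ℤ) {E E' : ℤ} {tl tl' : ℕ} (p p' : ℕ)
    (h : n ≤ Meas k E tl p)
    (hφ : (1 + (E.natAbs : ℤ) + tl - dead E) + 1 ≤ 1 + (E'.natAbs : ℤ) + tl' - dead E') :
    n + 1 ≤ Meas k E' tl' p' := by
  unfold Meas at h ⊢
  have hK : (0 : ℤ) ≤ 2 * (k : ℤ) + 2 := by positivity
  have hmul := mul_le_mul_of_nonneg_left hφ hK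
  have hexp : (2 * (k : ℤ) + 2) * ((1 + (E.natAbs : ℤ) + tl - dead E) + 1) =
      (2 * (k : ℤ) + 2) * (1 + (E.natAbs : ℤ) + tl - dead E) + (2 * (k : ℤ) + 2) := by ring
  rw [hexp] at hmul
  have h1 := posN_le (k := k) p
  have h2 := posN_nonneg (k := k) p'
  linarith

lemma Meas_le_merge (n : ℤ) {E E' : ℤ} {tl : ℕ} {p p' : ℕ}
    (h : n ≤ Meas k E tl p)
    (hpos : (posN k p' : ℤ) = posN k p + 1)
    (hφ : (E.natAbs : ℤ) - dead E ≤ (E'.natAbs : ℤ) - dead E') :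
    n + 1 ≤ Meas k E' tl p' := by
  unfold Meas at h ⊢
  have hK : (0 : ℤ) ≤ 2 * (k : ℤ) + 2 := by positivity
  have hφ' : (1 + (E.natAbs : ℤ) + tl - dead E) ≤ 1 + (E'.natAbs : ℤ) + tl - dead E' := by
    linarith
  have hmul := mul_le_mul_of_nonneg_left hφ' hK
  linarith

lemma Meas_base {E : ℤ} {tl : ℕ} (p : ℕ) (htl : 1 ≤ tl) : (1 : ℤ) ≤ Meas k E tl p := by
  unfold Meas
  have hd := dead_le_natAbs E
  have h2 := posN_nonneg (k := k) p
  have hφ : (1 : ℤ) ≤ 1 + (E.natAbs : ℤ) + tl - dead E := by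
    have : (1 : ℤ) ≤ (tl : ℤ) := by exact_mod_cast htl
    linarith
  nlinarith

/-! ### The invariant -/

def InvH (s : Fin k → ℕ) (x : ℕ) (w0 : Widx k) (l : List (Widx k)) : Prop :=
  ∃ (E : ℤ) (T : List (Lam k)),
    (((w0 :: l).map (Wfam s x)).prod
        = FreeGroup.mk (stW k (srcN w0) (side k (srcN w0)) E T))
    ∧ Reduced (stW k (srcN w0) (side k (srcN w0)) E T)
    ∧ (∀ u ∈ T.head?, u.1 ≠ Sum.inr (side k (srcN w0)))
    ∧ (E = 0 → ∃ q : ℕ, q < 2 * k + 2 ∧ T.head? = some (gn k q) ∧ srcN w0 < q ∧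
        (srcN w0 ≤ k → q ≤ k))
    ∧ (∃ (U : Finset (Fin k)) (ε : Bool), (∀ i ∈ U, lowB k (srcN w0) ≤ (i : ℕ)) ∧
        E = (∑ i ∈ U, (s i : ℤ)) - (if ε then (x : ℤ) else 0))
    ∧ (((w0 :: l).length : ℤ) ≤ Meas k E T.length (srcN w0))

lemma expW_zero (hs : ∀ i, 0 < s i) (hx : 0 < x) {w : Widx k} (h : expW s x w = 0) :
    srcN w < tgtN w ∧ (srcN w ≤ k → tgtN w ≤ k) := by
  rcases w with i | i | i | i | (_ | _)
  · exfalso; have := hs i; simp only [expW] at h; omega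
  · have := i.isLt; simp only [srcN, tgtN]; omega
  · exfalso; have := hs i; simp only [expW] at h; omega
  · simp only [srcN, tgtN]; omega
  · exfalso; simp only [expW] at h; omega
  · exfalso; simp only [expW] at h; omega

lemma expW_form (w : Widx k) : ∃ (U : Finset (Fin k)) (ε : Bool),
    (∀ i ∈ U, lowB k (srcN w) ≤ (i : ℕ)) ∧
    expW s x w = (∑ i ∈ U, (s i : ℤ)) - (if ε then (x : ℤ) else 0) := by
  rcases w with i | i | i | i | (_ | _)
  · refine ⟨{i}, false, ?_, ?_⟩
    · intro j hj
      rw [Finset.mem_singleton] at hj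
      subst hj
      have := j.isLt
      simp only [srcN, lowB]
      exact (if_pos (by omega : (j : ℕ) ≤ k)).le
    · simp [expW]
  · exact ⟨∅, false, by simp, by simp [expW]⟩
  · refine ⟨{i}, false, ?_, ?_⟩
    · intro j hj
      rw [Finset.mem_singleton] at hj
      subst hj
      simp only [srcN]; simp only [lowB]
      rw [if_neg (by omega)]
      omega
    · simp [expW]
  · exact ⟨∅, false, by simp, by simp [expW]⟩
  · exact ⟨∅, true, by simp, by simp [expW]⟩
  · exact ⟨∅, true, by simp, by simp [expW]⟩

lemma base_case (hs : ∀ i, 0 < s i) (hx : 0 < x) (w : Widx k) : InvH s x w [] := by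
  refine ⟨expW s x w, [gn k (tgtN w)], ?_, ?_, ?_, ?_, expW_form s x w, ?_⟩
  · rw [List.map_cons, List.map_nil, List.prod_cons, List.prod_nil, mul_one,
      mk_stW, mk_gn_cons, Wfam_eq s x w, sideW_eq, ← FreeGroup.one_eq_mk, mul_one]
  · refine reduced_stW (List.isChain_singleton _) ?_ ?_
    · intro u hu
      simp only [List.head?_cons, Option.mem_some_iff] at hu
      subst hu
      simp [gn]
    · intro hE u hu
      simp only [List.head?_cons, Option.mem_some_iff] at hu
      subst hu
      exact NR_gp_gn (srcN_lt w) (tgtN_lt w) (srcN_ne_tgtN w)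
  · intro u hu
    simp only [List.head?_cons, Option.mem_some_iff] at hu
    subst hu
    simp [gn]
  · intro hE
    obtain ⟨h1, h2⟩ := expW_zero s x hs hx hE
    exact ⟨tgtN w, tgtN_lt w, rfl, h1, h2⟩
  · simp only [List.length_cons, List.length_nil, Nat.cast_one, zero_add]
    exact Meas_base _ (by simp)

lemma step_fresh (hs : ∀ i, 0 < s i) (hx : 0 < x) (w0 w1 : Widx k) (l : List (Widx k))
    (hI : InvH s x w1 l) (hne : tgtN w0 ≠ srcN w1) : InvH s x w0 (w1 :: l) := by
  obtain ⟨E, T, hprod, hred, h3, h4, h5, h6⟩ := hI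
  refine ⟨expW s x w0, gn k (tgtN w0) :: stW k (srcN w1) (side k (srcN w1)) E T,
    ?_, ?_, ?_, ?_, expW_form s x w0, ?_⟩
  · rw [List.map_cons, List.prod_cons, hprod, Wfam_eq s x w0, sideW_eq,
      mk_stW, mk_stW, mk_gn_cons, mk_stW]
    group
  · refine reduced_stW ?_ ?_ ?_
    · refine List.isChain_cons.mpr ⟨?_, hred⟩
      intro u hu
      simp only [stW, List.head?_cons, Option.mem_some_iff] at hu
      subst hu
      intro ⟨hcon, _⟩
      exact hne (fi_inj (tgtN_lt w0) (srcN_lt w1) (by simpa [gn, gp] using hcon))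
    · intro u hu
      simp only [List.head?_cons, Option.mem_some_iff] at hu
      subst hu
      simp [gn]
    · intro hE u hu
      simp only [List.head?_cons, Option.mem_some_iff] at hu
      subst hu
      exact NR_gp_gn (srcN_lt w0) (tgtN_lt w0) (srcN_ne_tgtN w0)
  · intro u hu
    simp only [List.head?_cons, Option.mem_some_iff] at hu
    subst hu
    simp [gn]
  · intro hE
    obtain ⟨h1, h2⟩ := expW_zero s x hs hx hE
    exact ⟨tgtN w0, tgtN_lt w0, rfl, h1, h2⟩
  · have hlen : (gn k (tgtN w0) :: stW k (srcN w1) (side k (srcN w1)) E T).length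
        = 2 + E.natAbs + T.length := by
      simp [length_stW]; omega
    rw [hlen]
    have hφ : (1 + (E.natAbs : ℤ) + T.length - dead E) + 1
        ≤ 1 + ((expW s x w0).natAbs : ℤ) + ((2 + E.natAbs + T.length : ℕ) : ℤ)
          - dead (expW s x w0) := by
      have h1 := dead_le_natAbs (expW s x w0)
      have h2 := dead_nonneg E
      have hc : ((2 + E.natAbs + T.length : ℕ) : ℤ) = 2 + (E.natAbs : ℤ) + T.length := by
        push_cast; ring
      rw [hc]
      linarith
    have := Meas_le (n := ((w1 :: l).length : ℤ)) (srcN w1) (srcN w0) h6 hφ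
    simpa using this

lemma step_merge (H : ∀ U : Finset (Fin k), (∑ i ∈ U, s i) ≠ x)
    (w0 w1 : Widx k) (l : List (Widx k)) (hI : InvH s x w1 l)
    (hc : tgtN w0 = srcN w1)
    (harc : (srcN w0 ≤ k ∧ srcN w1 ≤ k) ∨ (k + 1 ≤ srcN w0 ∧ k + 1 ≤ srcN w1))
    (hpp : srcN w0 + 1 = srcN w1)
    (Uw : Finset (Fin k))
    (hUw : expW s x w0 = ∑ i ∈ Uw, (s i : ℤ))
    (hUwlow : ∀ i ∈ Uw, lowB k (srcN w0) ≤ (i : ℕ) ∧ (i : ℕ) < lowB k (srcN w1)) :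
    InvH s x w0 (w1 :: l) := by
  obtain ⟨E, T, hprod, hred, h3, h4, h5, h6⟩ := hI
  obtain ⟨U, ε, hUlow, hEeq⟩ := h5
  have hside : side k (srcN w0) = side k (srcN w1) := by
    rcases harc with ⟨h1, h2⟩ | ⟨h1, h2⟩ <;>
      (unfold side; rw [decide_eq_decide]; omega)
  have hlowle : lowB k (srcN w0) ≤ lowB k (srcN w1) := by
    rcases harc with ⟨h1, h2⟩ | ⟨h1, h2⟩ <;> (unfold lowB; split_ifs <;> omega)
  have hdisj : Disjoint Uw U := by
    rw [Finset.disjoint_left]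
    intro i hiw hiU
    have := (hUwlow i hiw).2
    have := hUlow i hiU
    omega
  set E' := expW s x w0 + E with hE'def
  have hE' : E' = (∑ i ∈ Uw ∪ U, (s i : ℤ)) - (if ε then (x : ℤ) else 0) := by
    rw [Finset.sum_union hdisj, hE'def, hUw, hEeq]
    ring
  have hkey : E' = 0 → E = 0 ∧ expW s x w0 = 0 := by
    intro h0
    cases ε with
    | true =>
      exfalso
      have hsum : (∑ i ∈ Uw ∪ U, (s i : ℤ)) = (x : ℤ) := by
        rw [hE'] at h0; simp at h0; linarith
      exact H (Uw ∪ U) (by exact_mod_cast hsum)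
    | false =>
      have hw : 0 ≤ expW s x w0 := by
        rw [hUw]; exact Finset.sum_nonneg (fun i _ => by positivity)
      have hE0 : 0 ≤ E := by
        rw [hEeq]; simp
        exact Finset.sum_nonneg (fun i _ => by positivity)
      constructor <;> omega
  have hexpnn : 0 ≤ expW s x w0 := by
    rw [hUw]; exact Finset.sum_nonneg (fun i _ => by positivity)
  have hChT : List.Chain' NR T := by
    have h1 : List.Chain' NR (blk k (side k (srcN w1)) E ++ T) := hred.tail
    exact (List.isChain_append.mp h1).2.1
  refine ⟨E', T, ?_, ?_, ?_, ?_, ?_, ?_⟩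
  · rw [List.map_cons, List.prod_cons, hprod, Wfam_eq s x w0, sideW_eq,
      mk_stW, mk_stW, hc, hside, hE'def]
    rw [zpow_add]
    group
  · refine reduced_stW hChT ?_ ?_
    · intro u hu
      rw [hside]
      exact h3 u hu
    · intro h0 u hu
      obtain ⟨hE0, _⟩ := hkey h0
      obtain ⟨q, hq, hhead, hlt, _⟩ := h4 hE0
      rw [hhead] at hu
      cases hu
      exact NR_gp_gn (srcN_lt w0) hq (by omega)
  · intro u hu
    rw [hside]
    exact h3 u hu
  · intro h0
    obtain ⟨hE0, _⟩ := hkey h0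
    obtain ⟨q, hq, hhead, hlt, hk⟩ := h4 hE0
    refine ⟨q, hq, hhead, by omega, ?_⟩
    intro hp0
    rcases harc with ⟨h1, h2⟩ | ⟨h1, h2⟩
    · exact hk h2
    · omega
  · refine ⟨Uw ∪ U, ε, ?_, hE'⟩
    intro i hi
    rcases Finset.mem_union.mp hi with hiw | hiU
    · exact (hUwlow i hiw).1
    · have := hUlow i hiU
      omega
  · have hpos : (posN k (srcN w0) : ℤ) = posN k (srcN w1) + 1 := by
      have := srcN_lt w1
      unfold posN
      omega
    have hφ : (E.natAbs : ℤ) - dead E ≤ (E'.natAbs : ℤ) - dead E' := by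
      have := phi_mono E (expW s x w0) hexpnn (fun h0 => (hkey (by rw [hE'def]; linarith)).2)
      rw [hE'def, add_comm]
      exact this
    have := Meas_le_merge (n := ((w1 :: l).length : ℤ)) h6 hpos hφ
    simpa using this

lemma step_cross (hx : 0 < x)
    (w0 w1 : Widx k) (l : List (Widx k)) (hI : InvH s x w1 l)
    (hc : tgtN w0 = srcN w1)
    (hform : expW s x w0 = -(x : ℤ))
    (hside : side k (srcN w0) ≠ side k (srcN w1)) :
    InvH s x w0 (w1 :: l) := by
  obtain ⟨E, T, hprod, hred, h3, h4, h5, h6⟩ := hI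
  have hChT : List.Chain' NR (blk k (side k (srcN w1)) E ++ T) := hred.tail
  have hxZ : -(x : ℤ) ≠ 0 := by omega
  have hhead' : ∀ u ∈ (blk k (side k (srcN w1)) E ++ T).head?,
      u.1 ≠ Sum.inr (side k (srcN w0)) := by
    intro u hu
    by_cases hE : E = 0
    · rw [hE, blk_zero, List.nil_append] at hu
      obtain ⟨q, hq, hhead, _, _⟩ := h4 hE
      rw [hhead] at hu
      cases hu
      simp [gn]
    · rw [List.head?_append_of_ne_nil _ (blk_ne_nil hE), head?_blk hE] at hu
      cases hu
      simp only [ne_eq, Sum.inr.injEq]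
      intro hcon
      exact hside (by rw [hcon])
  refine ⟨-(x : ℤ), blk k (side k (srcN w1)) E ++ T, ?_, ?_, ?_, ?_, ?_, ?_⟩
  · rw [List.map_cons, List.prod_cons, hprod, Wfam_eq s x w0, sideW_eq, hform,
      mk_stW, mk_stW, hc, ← FreeGroup.mul_mk, mk_blk]
    group
  · exact reduced_stW hChT hhead' (fun h0 => absurd h0 hxZ)
  · exact hhead'
  · intro h0
    exact absurd h0 hxZ
  · exact ⟨∅, true, by simp, by simp⟩
  · have hlen : (blk k (side k (srcN w1)) E ++ T).length = E.natAbs + T.length := by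
      simp [length_blk]
    rw [hlen]
    have hA : ((-(x : ℤ)).natAbs : ℤ) = (x : ℤ) := by omega
    have hD : dead (-(x : ℤ)) = (x : ℤ) - 1 := by unfold dead; omega
    have hφ : (1 + (E.natAbs : ℤ) + T.length - dead E) + 1
        ≤ 1 + ((-(x : ℤ)).natAbs : ℤ) + ((E.natAbs + T.length : ℕ) : ℤ) - dead (-(x : ℤ)) := by
      rw [hA, hD]
      have h2 := dead_nonneg E
      push_cast
      linarith
    have := Meas_le (n := ((w1 :: l).length : ℤ)) (srcN w1) (srcN w0) h6 hφ
    simpa using this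

theorem invH_all (H : ∀ U : Finset (Fin k), (∑ i ∈ U, s i) ≠ x)
    (hs : ∀ i, 0 < s i) (hx : 0 < x) :
    ∀ (l : List (Widx k)) (w : Widx k), InvH s x w l := by
  intro l
  induction l with
  | nil => intro w; exact base_case s x hs hx w
  | cons w1 t ih =>
    intro w0
    have hI := ih w1
    by_cases hc : tgtN w0 = srcN w1
    · rcases w0 with i | i | i | i | (_ | _)
      · -- u_i, merge
        have hil := i.isLt
        have hc' : (i : ℕ) + 1 = srcN w1 := by simpa [tgtN] using hc
        refine step_merge s x H _ _ _ hI hc ?_ ?_ {i} ?_ ?_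
        · rw [← hc']; left; exact ⟨by simp only [srcN]; omega, by omega⟩
        · rw [← hc']; simp only [srcN]
        · simp [expW]
        · intro j hj
          have hji : (j : ℕ) = (i : ℕ) := by
            rw [Finset.mem_singleton] at hj; rw [hj]
          rw [← hc']
          simp only [srcN]; simp only [lowB]
          split_ifs <;> omega
      · -- v_i, merge
        have hil := i.isLt
        have hc' : (i : ℕ) + 1 = srcN w1 := by simpa [tgtN] using hc
        refine step_merge s x H _ _ _ hI hc ?_ ?_ ∅ ?_ ?_
        · rw [← hc']; left; exact ⟨by simp only [srcN]; omega, by omega⟩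
        · rw [← hc']; simp only [srcN]
        · simp [expW]
        · intro j hj; simp at hj
      · -- u'_i, merge
        have hil := i.isLt
        have hc' : k + (i : ℕ) + 2 = srcN w1 := by simpa [tgtN] using hc
        refine step_merge s x H _ _ _ hI hc ?_ ?_ {i} ?_ ?_
        · rw [← hc']; right; exact ⟨by simp only [srcN]; omega, by omega⟩
        · rw [← hc']; simp only [srcN]
        · simp [expW]
        · intro j hj
          have hji : (j : ℕ) = (i : ℕ) := by
            rw [Finset.mem_singleton] at hj; rw [hj]
          rw [← hc']
          simp only [srcN]; simp only [lowB]
          split_ifs <;> omega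
      · -- v'_i, merge
        have hil := i.isLt
        have hc' : k + (i : ℕ) + 2 = srcN w1 := by simpa [tgtN] using hc
        refine step_merge s x H _ _ _ hI hc ?_ ?_ ∅ ?_ ?_
        · rw [← hc']; right; exact ⟨by simp only [srcN]; omega, by omega⟩
        · rw [← hc']; simp only [srcN]
        · simp [expW]
        · intro j hj; simp at hj
      · -- c, crossing
        have hc' : k + 1 = srcN w1 := by simpa [tgtN] using hc
        refine step_cross s x hx _ _ _ hI hc ?_ ?_
        · simp [expW]
        · rw [← hc']
          simp only [srcN]
          unfold side
          intro hcon
          rw [decide_eq_decide] at hcon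
          omega
      · -- d, crossing
        have hc' : 0 = srcN w1 := by simpa [tgtN] using hc
        refine step_cross s x hx _ _ _ hI hc ?_ ?_
        · simp [expW]
        · rw [← hc']
          simp only [srcN]
          unfold side
          intro hcon
          rw [decide_eq_decide] at hcon
          omega
    · exact step_fresh s x hs hx w0 w1 t hI hc

theorem length_le (H : ∀ U : Finset (Fin k), (∑ i ∈ U, s i) ≠ x)
    (hs : ∀ i, 0 < s i) (hx : 0 < x) (m : Fgrp k) (l : List (Widx k)) (hl : l ≠ [])
    (hm : (l.map (Wfam s x)).prod = m) :
    l.length ≤ (2 * k + 2) * m.toWord.length + (2 * k + 1) := by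
  rcases l with _ | ⟨w0, l'⟩
  · exact absurd rfl hl
  obtain ⟨E, T, hprod, hred, _, _, _, h6⟩ := invH_all s x H hs hx l' w0
  have hm2 : m.toWord = stW k (srcN w0) (side k (srcN w0)) E T := by
    rw [← hm, hprod, toWord_of_reduced hred]
  have hlen : m.toWord.length = 1 + E.natAbs + T.length := by rw [hm2, length_stW]
  have hD := dead_nonneg E
  have hpos := posN_le (k := k) (srcN w0)
  have hK : (0 : ℤ) ≤ 2 * (k : ℤ) + 2 := by positivity
  unfold Meas at h6
  have hmul : (2 * (k : ℤ) + 2) * (1 + (E.natAbs : ℤ) + T.length - dead E)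
      ≤ (2 * (k : ℤ) + 2) * (1 + (E.natAbs : ℤ) + T.length) :=
    mul_le_mul_of_nonneg_left (by linarith) hK
  have hfin : (((w0 :: l').length : ℕ) : ℤ)
      ≤ (2 * (k : ℤ) + 2) * (1 + (E.natAbs : ℤ) + T.length) + (2 * (k : ℤ) + 1) := by
    linarith
  rw [hlen]
  exact_mod_cast hfin

/-! ### The easy direction: a subset sum solution gives a product equal to 1 -/

def choiceA (U : Finset (Fin k)) (i : Fin k) : Widx k :=
  if i ∈ U then Sum.inl i else Sum.inr (Sum.inl i)

def choiceB (U : Finset (Fin k)) (i : Fin k) : Widx k :=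
  if i ∈ U then Sum.inr (Sum.inr (Sum.inl i)) else Sum.inr (Sum.inr (Sum.inr (Sum.inl i)))

def La (U : Finset (Fin k)) (j : ℕ) : List (Widx k) :=
  (List.range j).filterMap (fun n => if h : n < k then some (choiceA U ⟨n, h⟩) else none)

def Lb (U : Finset (Fin k)) (j : ℕ) : List (Widx k) :=
  (List.range j).filterMap (fun n => if h : n < k then some (choiceB U ⟨n, h⟩) else none)

lemma La_succ (U : Finset (Fin k)) (j : ℕ) (h : j < k) :
    La U (j + 1) = La U j ++ [choiceA U ⟨j, h⟩] := by
  unfold La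
  rw [List.range_succ, List.filterMap_append]
  simp [h]

lemma Lb_succ (U : Finset (Fin k)) (j : ℕ) (h : j < k) :
    Lb U (j + 1) = Lb U j ++ [choiceB U ⟨j, h⟩] := by
  unfold Lb
  rw [List.range_succ, List.filterMap_append]
  simp [h]

lemma sum_step (U : Finset (Fin k)) (j : ℕ) (hj : j < k) :
    (∑ i ∈ U, if (i : ℕ) < j + 1 then (s i : ℤ) else 0)
      = (∑ i ∈ U, if (i : ℕ) < j then (s i : ℤ) else 0)
        + (if (⟨j, hj⟩ : Fin k) ∈ U then (s ⟨j, hj⟩ : ℤ) else 0) := by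
  have h1 : (if (⟨j, hj⟩ : Fin k) ∈ U then ((s ⟨j, hj⟩ : ℤ)) else 0)
      = ∑ i ∈ U, if i = (⟨j, hj⟩ : Fin k) then (s i : ℤ) else 0 :=
    (Finset.sum_ite_eq' U (⟨j, hj⟩ : Fin k) (fun i => (s i : ℤ))).symm
  rw [h1, ← Finset.sum_add_distrib]
  apply Finset.sum_congr rfl
  intro i _
  by_cases hij : i = (⟨j, hj⟩ : Fin k)
  · subst hij
    rw [if_pos rfl, if_pos (Nat.lt_succ_self j), if_neg (Nat.lt_irrefl j)]
    ring
  · have hij' : (i : ℕ) ≠ j := fun hcon => hij (Fin.ext hcon)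
    rw [if_neg hij]
    split_ifs with h1' h2'
    · ring
    · exfalso; omega
    · exfalso; omega
    · ring

lemma prod_La (U : Finset (Fin k)) : ∀ j, j ≤ k →
    ((La U j).map (Wfam s x)).prod
      = gg k 0 * zz k false ^ (∑ i ∈ U, if (i : ℕ) < j then (s i : ℤ) else 0) * (gg k j)⁻¹ := by
  intro j
  induction j with
  | zero =>
    intro _
    simp [La]
  | succ j ih =>
    intro hj
    have hjk : j < k := hj
    rw [La_succ U j hjk, List.map_append, List.prod_append, ih (le_of_lt hjk),
      sum_step s U j hjk]
    simp only [List.map_cons, List.map_nil, List.prod_cons, List.prod_nil, mul_one]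
    unfold choiceA
    split_ifs with hmem
    · rw [Wfam_eq s x (Sum.inl (⟨j, hjk⟩ : Fin k))]
      simp only [srcN, tgtN, sideW, expW, Fin.val_mk]
      rw [zpow_add]
      group
    · rw [Wfam_eq s x (Sum.inr (Sum.inl (⟨j, hjk⟩ : Fin k)))]
      simp only [srcN, tgtN, sideW, expW, Fin.val_mk, add_zero, zpow_zero]
      group

lemma prod_Lb (U : Finset (Fin k)) : ∀ j, j ≤ k →
    ((Lb U j).map (Wfam s x)).prod
      = gg k (k + 1) * zz k true ^ (∑ i ∈ U, if (i : ℕ) < j then (s i : ℤ) else 0)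
          * (gg k (k + j + 1))⁻¹ := by
  intro j
  induction j with
  | zero =>
    intro _
    simp [Lb]
  | succ j ih =>
    intro hj
    have hjk : j < k := hj
    rw [Lb_succ U j hjk, List.map_append, List.prod_append, ih (le_of_lt hjk),
      sum_step s U j hjk]
    simp only [List.map_cons, List.map_nil, List.prod_cons, List.prod_nil, mul_one]
    unfold choiceB
    split_ifs with hmem
    · rw [Wfam_eq s x (Sum.inr (Sum.inr (Sum.inl (⟨j, hjk⟩ : Fin k))))]
      simp only [srcN, tgtN, sideW, expW, Fin.val_mk]
      rw [zpow_add, show k + j + 2 = k + (j + 1) + 1 by omega]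
      group
    · rw [Wfam_eq s x (Sum.inr (Sum.inr (Sum.inr (Sum.inl (⟨j, hjk⟩ : Fin k)))))]
      simp only [srcN, tgtN, sideW, expW, Fin.val_mk, add_zero, zpow_zero]
      rw [show k + j + 2 = k + (j + 1) + 1 by omega]
      group

def cyc (U : Finset (Fin k)) : List (Widx k) :=
  La U k ++ [Sum.inr (Sum.inr (Sum.inr (Sum.inr false)))]
    ++ Lb U k ++ [Sum.inr (Sum.inr (Sum.inr (Sum.inr true)))]

lemma prod_cyc (U : Finset (Fin k)) (hU : (∑ i ∈ U, s i) = x) :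
    ((cyc U).map (Wfam s x)).prod = 1 := by
  have hsum : (∑ i ∈ U, if (i : ℕ) < k then (s i : ℤ) else 0) = (x : ℤ) := by
    rw [Finset.sum_congr rfl (fun i _ => if_pos i.isLt)]
    exact_mod_cast hU
  unfold cyc
  rw [List.map_append, List.prod_append, List.map_append, List.prod_append,
    List.map_append, List.prod_append, prod_La s x U k le_rfl, prod_Lb s x U k le_rfl, hsum]
  simp only [List.map_cons, List.map_nil, List.prod_cons, List.prod_nil, mul_one]
  rw [Wfam_eq s x (Sum.inr (Sum.inr (Sum.inr (Sum.inr false)))),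
    Wfam_eq s x (Sum.inr (Sum.inr (Sum.inr (Sum.inr true))))]
  simp only [srcN, tgtN, sideW, expW]
  rw [show k + k + 1 = 2 * k + 1 by omega]
  group

lemma cyc_ne_nil (U : Finset (Fin k)) : cyc U ≠ [] := by
  unfold cyc
  simp

def reps (l0 : List (Widx k)) : ℕ → List (Widx k)
  | 0 => l0
  | n + 1 => l0 ++ reps l0 n

lemma prod_reps (l0 : List (Widx k)) (h : (l0.map (Wfam s x)).prod = 1) :
    ∀ n, ((reps l0 n).map (Wfam s x)).prod = 1
  | 0 => h
  | n + 1 => by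
    rw [reps, List.map_append, List.prod_append, h, prod_reps l0 h n, one_mul]

lemma len_reps (l0 : List (Widx k)) : ∀ n, (reps l0 n).length = (n + 1) * l0.length
  | 0 => by simp [reps]
  | n + 1 => by
    rw [reps, List.length_append, len_reps l0 n]
    ring

lemma reps_ne_nil (l0 : List (Widx k)) (h : l0 ≠ []) (n : ℕ) : reps l0 n ≠ [] := by
  intro hcon
  apply h
  have hlen := congrArg List.length hcon
  rw [len_reps] at hlen
  simp only [List.length_nil] at hlen
  have hl : l0.length = 0 := by
    rcases Nat.mul_eq_zero.mp hlen with h1 | h1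
    · omega
    · exact h1
  exact List.eq_nil_of_length_eq_zero hl
end SSFG


/-- There exists an element of the subsemigroup of `F` generated by the family `W`
having infinitely many distinct factorizations over `W` iff the subset sum instance
`(s₁,…,s_k; x)` has a solution. -/
theorem exists_infinitely_factorizable_iff_subset_sum (k : ℕ) (hk : 1 ≤ k)
    (s : Fin k → ℕ) (hs : ∀ i, 0 < s i) (x : ℕ) (hx : 0 < x) :
    (∃ m : Fgrp k,
        { l : List (Widx k) | l ≠ [] ∧ (l.map (Wfam s x)).prod = m }.Infinite) ↔
      (∃ U : Finset (Fin k), ∑ i ∈ U, s i = x) := by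
  constructor
  · rintro ⟨m, hinf⟩
    by_contra hno
    have H : ∀ U : Finset (Fin k), (∑ i ∈ U, s i) ≠ x := fun U h => hno ⟨U, h⟩
    refine hinf ?_
    apply Set.Finite.subset
      (List.finite_length_le (Widx k) ((2 * k + 2) * m.toWord.length + (2 * k + 1)))
    rintro l ⟨hne, hprod⟩
    exact SSFG.length_le s x H hs hx m l hne hprod
  · rintro ⟨U, hU⟩
    refine ⟨1, ?_⟩
    have hprod1 := SSFG.prod_cyc s x U hU
    apply Set.infinite_of_injective_forall_mem (f := fun n => SSFG.reps (SSFG.cyc U) n)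
    · intro a b hab
      have hlen := congrArg List.length hab
      rw [SSFG.len_reps, SSFG.len_reps] at hlen
      have hpos : 0 < (SSFG.cyc U).length := by
        cases hcl : (SSFG.cyc U) with
        | nil => exact absurd hcl (SSFG.cyc_ne_nil U)
        | cons a t => simp
      have := Nat.eq_of_mul_eq_mul_right hpos hlen
      omega
    · intro n
      exact ⟨SSFG.reps_ne_nil (SSFG.cyc U) (SSFG.cyc_ne_nil U) n,
        SSFG.prod_reps s x (SSFG.cyc U) hprod1 n⟩
end

section
/- The element v₁ = g₀ · g₁^{-1} has infinitely many distinct factorizations over the family W if and only if there exists a subset U ⊆ {1,…,k} with ∑_{i∈U} s_i = x. -/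
set_option linter.unusedSectionVars false
set_option maxHeartbeats 1000000



section Generic
variable {α : Type*} [DecidableEq α]
def NCpair (a b : α × Bool) : Prop := ¬(a.1 = b.1 ∧ a.2 = !b.2)
end Generic

namespace SSF
variable {k : ℕ}

/-- a block `a^e` or `b^e` of the content word -/
def blockElt (b : Bool × ℤ) : Fgrp k := (FreeGroup.of (Sum.inr b.1) : Fgrp k) ^ b.2
def blockWord (k : ℕ) (b : Bool × ℤ) : List ((Fin (2*k+2) ⊕ Bool) × Bool) :=
  List.replicate b.2.natAbs (Sum.inr b.1, decide (0 < b.2))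

def celt (B : List (Bool × ℤ)) : Fgrp k := (B.map blockElt).prod
def cword (k : ℕ) (B : List (Bool × ℤ)) : List ((Fin (2*k+2) ⊕ Bool) × Bool) :=
  B.flatMap (blockWord k)

structure Run (k : ℕ) where
  p : Fin (2*k+2)
  q : Fin (2*k+2)
  B : List (Bool × ℤ)

@[simp] theorem Run.mk_p (p q : Fin (2*k+2)) (B : List (Bool × ℤ)) :
    (⟨p, q, B⟩ : Run k).p = p := rfl
@[simp] theorem Run.mk_q (p q : Fin (2*k+2)) (B : List (Bool × ℤ)) :
    (⟨p, q, B⟩ : Run k).q = q := rfl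
@[simp] theorem Run.mk_B (p q : Fin (2*k+2)) (B : List (Bool × ℤ)) :
    (⟨p, q, B⟩ : Run k).B = B := rfl

def Run.elt (r : Run k) : Fgrp k := gGen r.p * celt r.B * (gGen r.q)⁻¹
def Run.word (r : Run k) : List ((Fin (2*k+2) ⊕ Bool) × Bool) :=
  (Sum.inl r.p, true) :: (cword k r.B ++ [(Sum.inl r.q, false)])

def prodR (R : List (Run k)) : Fgrp k := (R.map Run.elt).prod
def wordR (R : List (Run k)) : List ((Fin (2*k+2) ⊕ Bool) × Bool) := R.flatMap Run.word

def pblock (c : Bool) (e : ℤ) : List (Bool × ℤ) := if e = 0 then [] else [(c, e)]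
def lastTy (B : List (Bool × ℤ)) : Option Bool := B.getLast?.map Prod.fst

def AltNZ (B : List (Bool × ℤ)) : Prop :=
  B.Chain' (fun u v => u.1 ≠ v.1) ∧ ∀ b ∈ B, b.2 ≠ 0
def GoodRun (r : Run k) : Prop := AltNZ r.B ∧ (r.B = [] → r.p.val < r.q.val)

def SSb (s : Fin k → ℕ) (m E : ℕ) : Prop :=
  ∃ U : Finset (Fin k), (∀ i ∈ U, (i : ℕ) < m) ∧ ∑ i ∈ U, s i = E

def PhaseA (s : Fin k → ℕ) (r : Run k) : Prop :=
  ∃ B₀ E, 1 ≤ r.q.val ∧ r.q.val ≤ k ∧ SSb s r.q.val E ∧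
    r.B = B₀ ++ pblock false (E : ℤ) ∧ lastTy B₀ ≠ some false
def PhaseB (s : Fin k → ℕ) (r : Run k) : Prop :=
  ∃ B₁ F, k + 1 ≤ r.q.val ∧ SSb s (r.q.val - (k+1)) F ∧
    r.B = B₁ ++ pblock true (F : ℤ) ∧ lastTy B₁ ≠ some true
def PhaseC (r : Run k) : Prop := r.q.val = 0 ∧ lastTy r.B = some true

def State (s : Fin k → ℕ) (R : List (Run k)) : Prop :=
  (∃ R' r, R = R' ++ [r] ∧ (PhaseA s r ∨ PhaseB s r ∨ PhaseC r)) ∧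
    (∀ r ∈ R, GoodRun r) ∧ R.Chain' (fun a b => a.q ≠ b.p)

/-- source vertex of each `W` element -/
def src (j : Widx k) : Fin (2*k+2) :=
  match j with
  | Sum.inl i => ⟨(i : ℕ), by have := i.isLt; omega⟩
  | Sum.inr (Sum.inl i) => ⟨(i : ℕ), by have := i.isLt; omega⟩
  | Sum.inr (Sum.inr (Sum.inl i)) => ⟨k + (i : ℕ) + 1, by have := i.isLt; omega⟩
  | Sum.inr (Sum.inr (Sum.inr (Sum.inl i))) => ⟨k + (i : ℕ) + 1, by have := i.isLt; omega⟩
  | Sum.inr (Sum.inr (Sum.inr (Sum.inr false))) => ⟨k, by omega⟩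
  | Sum.inr (Sum.inr (Sum.inr (Sum.inr true))) => ⟨2 * k + 1, by omega⟩

def tgt (j : Widx k) : Fin (2*k+2) :=
  match j with
  | Sum.inl i => ⟨(i : ℕ) + 1, by have := i.isLt; omega⟩
  | Sum.inr (Sum.inl i) => ⟨(i : ℕ) + 1, by have := i.isLt; omega⟩
  | Sum.inr (Sum.inr (Sum.inl i)) => ⟨k + (i : ℕ) + 2, by have := i.isLt; omega⟩
  | Sum.inr (Sum.inr (Sum.inr (Sum.inl i))) => ⟨k + (i : ℕ) + 2, by have := i.isLt; omega⟩
  | Sum.inr (Sum.inr (Sum.inr (Sum.inr false))) => ⟨k + 1, by omega⟩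
  | Sum.inr (Sum.inr (Sum.inr (Sum.inr true))) => ⟨0, by omega⟩

def startB (s : Fin k → ℕ) (x : ℕ) (j : Widx k) : List (Bool × ℤ) :=
  match j with
  | Sum.inl i => pblock false (s i : ℤ)
  | Sum.inr (Sum.inl _) => []
  | Sum.inr (Sum.inr (Sum.inl i)) => pblock true (s i : ℤ)
  | Sum.inr (Sum.inr (Sum.inr (Sum.inl _))) => []
  | Sum.inr (Sum.inr (Sum.inr (Sum.inr false))) => pblock false (-(x : ℤ))
  | Sum.inr (Sum.inr (Sum.inr (Sum.inr true))) => pblock true (-(x : ℤ))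

def startRun (s : Fin k → ℕ) (x : ℕ) (j : Widx k) : Run k := ⟨src j, tgt j, startB s x j⟩

end SSF

namespace SSF
variable {k : ℕ} (s : Fin k → ℕ) (x : ℕ)

theorem celt_append (B₁ B₂ : List (Bool × ℤ)) :
    (celt (B₁ ++ B₂) : Fgrp k) = celt B₁ * celt B₂ := by
  simp [celt]

theorem celt_pblock (c : Bool) (e : ℤ) :
    (celt (pblock c e) : Fgrp k) = (FreeGroup.of (Sum.inr c) : Fgrp k) ^ e := by
  unfold pblock
  split
  · simp [celt, *]
  · simp [celt, blockElt]

theorem celt_merge (B₀ : List (Bool × ℤ)) (c : Bool) (e e' : ℤ) :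
    (celt (B₀ ++ pblock c e) : Fgrp k) * (FreeGroup.of (Sum.inr c) : Fgrp k) ^ e'
      = celt (B₀ ++ pblock c (e + e')) := by
  rw [celt_append, celt_append, celt_pblock, celt_pblock, mul_assoc, ← zpow_add]

theorem W_decomp (j : Widx k) :
    Wfam s x j = gGen (src j) * celt (startB s x j) * (gGen (tgt j))⁻¹ := by
  rcases j with i | i | i | i | b
  · simp [Wfam, src, tgt, startB, celt_pblock, zpow_natCast, aGen, bGen]
  · simp [Wfam, src, tgt, startB, celt]
  · simp [Wfam, src, tgt, startB, celt_pblock, zpow_natCast, aGen, bGen]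
  · simp [Wfam, src, tgt, startB, celt]
  · cases b <;>
      simp [Wfam, src, tgt, startB, celt_pblock, zpow_neg, zpow_natCast, aGen, bGen]

theorem W_eq_startRun (j : Widx k) :
    Wfam s x j = (startRun s x j).elt := W_decomp s x j

theorem prodR_append (R₁ R₂ : List (Run k)) :
    prodR (R₁ ++ R₂) = prodR R₁ * prodR R₂ := by simp [prodR]

theorem prodR_singleton (r : Run k) : prodR [r] = r.elt := by simp [prodR]

/-- extending the last run by a matched factor -/
theorem prodR_extend (R' : List (Run k)) (r : Run k) (j : Widx k) (B' : List (Bool × ℤ))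
    (hq : r.q = src j) (halg : (celt r.B * celt (startB s x j) : Fgrp k) = celt B') :
    prodR (R' ++ [r]) * Wfam s x j = prodR (R' ++ [(⟨r.p, tgt j, B'⟩ : Run k)]) := by
  rw [prodR_append, prodR_append, prodR_singleton, prodR_singleton, W_decomp s x j, mul_assoc]
  congr 1
  rw [Run.elt, Run.elt, hq]
  group
  rw [mul_assoc (gGen r.p), halg]

end SSF

namespace SSF
variable {k : ℕ}

section Generic2
variable {α : Type*} [DecidableEq α]

theorem reduce_eq_self_of_chain {w : List (α × Bool)} (h : w.Chain' NCpair) :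
    FreeGroup.reduce w = w := by
  induction w with
  | nil => rfl
  | cons a t ih =>
    have ht : t.Chain' NCpair := h.tail
    rw [FreeGroup.reduce.cons, ih ht]
    cases t with
    | nil => rfl
    | cons b t' =>
      have hab : NCpair a b := (List.isChain_cons_cons.mp h).1
      simp only [NCpair] at hab
      simp [hab]

theorem mk_of_pow (y : α) (n : ℕ) :
    (FreeGroup.of y : FreeGroup α) ^ n = FreeGroup.mk (List.replicate n (y, true)) := by
  induction n with
  | zero => rfl
  | succ n ih =>
    rw [pow_succ, ih]
    show _ = FreeGroup.mk (List.replicate (n+1) (y, true))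
    rw [List.replicate_succ' (n := n)]
    have : (FreeGroup.of y : FreeGroup α) = FreeGroup.mk [(y, true)] := rfl
    rw [this, FreeGroup.mul_mk]

theorem mk_of_pow_neg (y : α) (n : ℕ) :
    ((FreeGroup.of y : FreeGroup α) ^ n)⁻¹ = FreeGroup.mk (List.replicate n (y, false)) := by
  rw [mk_of_pow, FreeGroup.inv_mk]
  congr 1
  unfold FreeGroup.invRev
  simp [List.map_replicate, List.reverse_replicate]

theorem mk_of_zpow (y : α) (e : ℤ) :
    (FreeGroup.of y : FreeGroup α) ^ e
      = FreeGroup.mk (List.replicate e.natAbs (y, decide (0 < e))) := by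
  rcases e with n | n
  · rw [Int.ofNat_eq_coe, zpow_natCast, mk_of_pow]
    cases n with
    | zero => rfl
    | succ m =>
      have h1 : ((m + 1 : ℕ) : ℤ).natAbs = m + 1 := by omega
      have h2 : (decide ((0:ℤ) < ((m + 1 : ℕ) : ℤ))) = true := by simp
      rw [h1, h2]
  · rw [zpow_negSucc, mk_of_pow_neg]
    norm_num
end Generic2

theorem blockElt_eq_mk (b : Bool × ℤ) :
    (blockElt b : Fgrp k) = FreeGroup.mk (blockWord k b) :=
  mk_of_zpow _ _

theorem celt_eq_mk (B : List (Bool × ℤ)) :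
    (celt B : Fgrp k) = FreeGroup.mk (cword k B) := by
  induction B with
  | nil => rfl
  | cons b t ih =>
    rw [show (b :: t) = [b] ++ t by rfl, celt_append]
    rw [show cword k ([b] ++ t) = blockWord k b ++ cword k t by simp [cword]]
    rw [← FreeGroup.mul_mk, ← ih]
    congr 1
    simp [celt, blockElt_eq_mk]

theorem runElt_eq_mk (r : Run k) : r.elt = FreeGroup.mk r.word := by
  rw [Run.elt, Run.word, celt_eq_mk]
  have h1 : (gGen r.p : Fgrp k) = FreeGroup.mk [(Sum.inl r.p, true)] := rfl
  have h2 : ((gGen r.q)⁻¹ : Fgrp k) = FreeGroup.mk [(Sum.inl r.q, false)] := by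
    rw [show (gGen r.q : Fgrp k) = FreeGroup.mk [(Sum.inl r.q, true)] from rfl,
      FreeGroup.inv_mk]
    rfl
  rw [h1, h2, FreeGroup.mul_mk, FreeGroup.mul_mk]
  simp

theorem prodR_eq_mk (R : List (Run k)) : prodR R = FreeGroup.mk (wordR R) := by
  induction R with
  | nil => rfl
  | cons r t ih =>
    rw [show (r :: t) = [r] ++ t by rfl, prodR_append, prodR_singleton, ih,
      runElt_eq_mk, FreeGroup.mul_mk]
    simp [wordR]

end SSF

namespace SSF
variable {k : ℕ}

theorem chain'_replicate {α : Type*} {R : α → α → Prop} {a : α} (h : R a a) (n : ℕ) :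
    List.Chain' R (List.replicate n a) := by
  induction n with
  | zero => simp [List.Chain']
  | succ n ih =>
    rw [List.replicate_succ]
    cases n with
    | zero => simp [List.Chain']
    | succ m =>
      rw [List.replicate_succ]
      exact List.isChain_cons_cons.mpr ⟨h, by rwa [List.replicate_succ] at ih⟩

theorem blockWord_ne_nil {b : Bool × ℤ} (h : b.2 ≠ 0) : blockWord k b ≠ [] := by
  intro hcon
  rw [blockWord, List.replicate_eq_nil_iff] at hcon
  omega

theorem blockWord_head {b : Bool × ℤ} (h : b.2 ≠ 0) :
    (blockWord k b).head? = some (Sum.inr b.1, decide (0 < b.2)) := by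
  rw [blockWord]
  have : b.2.natAbs ≠ 0 := by omega
  cases hn : b.2.natAbs with
  | zero => omega
  | succ m => simp [List.replicate_succ]

theorem blockWord_last {b : Bool × ℤ} (h : b.2 ≠ 0) :
    (blockWord k b).getLast? = some (Sum.inr b.1, decide (0 < b.2)) := by
  rw [blockWord]
  cases hn : b.2.natAbs with
  | zero => omega
  | succ m => rw [List.replicate_succ' (n := m)]; simp

theorem mem_blockWord_fst {b : Bool × ℤ} {y : (Fin (2*k+2) ⊕ Bool) × Bool}
    (hy : y ∈ blockWord k b) : y.1 = Sum.inr b.1 := by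
  simp [blockWord] at hy
  rw [hy.2]

theorem mem_cword_fst {B : List (Bool × ℤ)} {y : (Fin (2*k+2) ⊕ Bool) × Bool}
    (hy : y ∈ cword k B) : ∃ c, c ∈ B ∧ y.1 = Sum.inr c.1 := by
  simp only [cword, List.mem_flatMap] at hy
  obtain ⟨b, hb, hyb⟩ := hy
  exact ⟨b, hb, mem_blockWord_fst hyb⟩

theorem chain'_blockWord (b : Bool × ℤ) : List.Chain' NCpair (blockWord k b) := by
  apply chain'_replicate
  simp [NCpair]

theorem cword_nil_iff {B : List (Bool × ℤ)} (hNZ : ∀ b ∈ B, b.2 ≠ 0) :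
    cword k B = [] ↔ B = [] := by
  constructor
  · intro h
    cases B with
    | nil => rfl
    | cons b t =>
      exfalso
      have hne : blockWord k b ≠ [] := blockWord_ne_nil (hNZ b (by simp))
      rw [show cword k (b :: t) = blockWord k b ++ cword k t by simp [cword],
        List.append_eq_nil_iff] at h
      exact hne h.1
  · intro h; simp [h, cword]

theorem cword_head {B : List (Bool × ℤ)} (hNZ : ∀ b ∈ B, b.2 ≠ 0) {b : Bool × ℤ}
    {t : List (Bool × ℤ)} (hB : B = b :: t) :
    (cword k B).head? = some (Sum.inr b.1, decide (0 < b.2)) := by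
  subst hB
  rw [show cword k (b :: t) = blockWord k b ++ cword k t by simp [cword],
    List.head?_append_of_ne_nil _ (blockWord_ne_nil (hNZ b (by simp)))]
  exact blockWord_head (hNZ b (by simp))

theorem chain'_cword {B : List (Bool × ℤ)} (h : AltNZ B) :
    List.Chain' NCpair (cword k B) := by
  obtain ⟨hA, hNZ⟩ := h
  induction B with
  | nil => simp [cword, List.Chain']
  | cons b t ih =>
    rw [show cword k (b :: t) = blockWord k b ++ cword k t by simp [cword]]
    have hNZt : ∀ c ∈ t, c.2 ≠ 0 := fun c hc => hNZ c (by simp [hc])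
    refine List.isChain_append.mpr ⟨chain'_blockWord b, ih hA.tail hNZt, ?_⟩
    intro y hy z hz
    have hy1 : y.1 = Sum.inr b.1 := mem_blockWord_fst (List.mem_of_mem_getLast? hy)
    cases t with
    | nil => simp [cword] at hz
    | cons c t' =>
      rw [cword_head hNZt rfl] at hz
      have hz1 : z = (Sum.inr c.1, decide (0 < c.2)) := by
        have := hz; simp at this; exact this.symm
      have hbc : b.1 ≠ c.1 := (List.isChain_cons_cons.mp hA).1
      intro hcon
      rw [hy1, hz1] at hcon
      exact hbc (by simpa using hcon.1)

theorem chain'_runWord {r : Run k} (h : GoodRun r) : List.Chain' NCpair r.word := by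
  obtain ⟨⟨hA, hNZ⟩, hpq⟩ := h
  rw [Run.word]
  refine List.isChain_cons.mpr ?_
  constructor
  · intro y hy
    cases hcw : cword k r.B with
    | nil =>
      rw [hcw] at hy
      have hz : y = (Sum.inl r.q, false) := by
        have := hy; simp at this; exact this.symm
      have hB : r.B = [] := (cword_nil_iff hNZ).mp hcw
      have := hpq hB
      intro hcon
      rw [hz] at hcon
      have : r.p = r.q := by simpa using hcon.1
      omega
    | cons w t =>
      rw [hcw] at hy
      have hy' : y = w := by have := hy; simp at this; exact this.symm
      have hw : w ∈ cword k r.B := by rw [hcw]; simp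
      obtain ⟨c, _, hfst⟩ := mem_cword_fst hw
      intro hcon
      rw [hy', hfst] at hcon
      exact (by simpa using hcon.1 : False)
  · refine List.isChain_append.mpr ⟨chain'_cword ⟨hA, hNZ⟩, by simp, ?_⟩
    intro y hy z hz
    have hz' : z = (Sum.inl r.q, false) := by
      have := hz; simp at this; exact this.symm
    obtain ⟨c, _, hfst⟩ := mem_cword_fst (List.mem_of_mem_getLast? hy)
    intro hcon
    rw [hz', hfst] at hcon
    exact (by simpa using hcon.1 : False)

theorem runWord_ne_nil (r : Run k) : r.word ≠ [] := by simp [Run.word]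

theorem runWord_head (r : Run k) : (r.word).head? = some (Sum.inl r.p, true) := rfl

theorem runWord_last (r : Run k) : (r.word).getLast? = some (Sum.inl r.q, false) := by
  rw [Run.word, List.getLast?_cons, List.getLast?_append_of_ne_nil _ (by simp)]
  simp

theorem chain'_wordR {s : Fin k → ℕ} {R : List (Run k)} (hst : State s R) :
    List.Chain' NCpair (wordR R) := by
  obtain ⟨-, hGR, hCh⟩ := hst
  induction R with
  | nil => simp [wordR, List.Chain']
  | cons r t ih =>
    rw [show wordR (r :: t) = r.word ++ wordR t by simp [wordR]]
    have hGRt : ∀ r' ∈ t, GoodRun r' := fun r' h => hGR r' (by simp [h])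
    refine List.isChain_append.mpr ⟨chain'_runWord (hGR r (by simp)), ih hGRt hCh.tail, ?_⟩
    intro y hy z hz
    cases t with
    | nil => simp [wordR] at hz
    | cons r' t' =>
      rw [show wordR (r' :: t') = r'.word ++ wordR t' by simp [wordR],
        List.head?_append_of_ne_nil _ (runWord_ne_nil r'), runWord_head] at hz
      rw [runWord_last] at hy
      have hy' : y = (Sum.inl r.q, false) := by
        have := hy; simp at this; exact this.symm
      have hz' : z = (Sum.inl r'.p, true) := by
        have := hz; simp at this; exact this.symm
      have hqp : r.q ≠ r'.p := (List.isChain_cons_cons.mp hCh).1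
      intro hcon
      rw [hy', hz'] at hcon
      exact hqp (by simpa using hcon.1)

end SSF

namespace SSF
variable {k : ℕ}

def z0 (k : ℕ) : Fin (2*k+2) := ⟨0, by omega⟩
def z1 (k : ℕ) : Fin (2*k+2) := ⟨1, by omega⟩

theorem target_eq_mk :
    (gGen (z0 k) * (gGen (z1 k))⁻¹ : Fgrp k)
      = FreeGroup.mk [(Sum.inl (z0 k), true), (Sum.inl (z1 k), false)] := by
  have h1 : (gGen (z0 k) : Fgrp k) = FreeGroup.mk [(Sum.inl (z0 k), true)] := rfl
  have h2 : ((gGen (z1 k))⁻¹ : Fgrp k) = FreeGroup.mk [(Sum.inl (z1 k), false)] := by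
    rw [show (gGen (z1 k) : Fgrp k) = FreeGroup.mk [(Sum.inl (z1 k), true)] from rfl,
      FreeGroup.inv_mk]
    rfl
  rw [h1, h2, FreeGroup.mul_mk]
  rfl

theorem state_nf {s : Fin k → ℕ} {R : List (Run k)} (hst : State s R)
    (hP : prodR R = gGen (z0 k) * (gGen (z1 k))⁻¹) :
    R = [⟨z0 k, z1 k, []⟩] := by
  have hword : wordR R = [(Sum.inl (z0 k), true), (Sum.inl (z1 k), false)] := by
    have h1 : FreeGroup.mk (wordR R)
        = FreeGroup.mk [(Sum.inl (z0 k), true), (Sum.inl (z1 k), false)] := by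
      rw [← prodR_eq_mk, ← target_eq_mk]; exact hP
    have h2 := congrArg FreeGroup.toWord h1
    rw [FreeGroup.toWord_mk, FreeGroup.toWord_mk,
      reduce_eq_self_of_chain (chain'_wordR hst),
      reduce_eq_self_of_chain (by
        refine List.isChain_cons_cons.mpr ⟨?_, by simp⟩
        intro hcon
        have : z0 k = z1 k := by simpa using hcon.1
        have := congrArg Fin.val this
        simp [z0, z1] at this)] at h2
    exact h2
  obtain ⟨R', r, hRR, -⟩ := hst.1
  have hGRr : GoodRun r := hst.2.1 r (by simp [hRR])
  subst hRR
  have hsplit : wordR (R' ++ [r]) = wordR R' ++ r.word := by simp [wordR]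
  rw [hsplit] at hword
  have hlen := congrArg List.length hword
  simp [Run.word] at hlen
  have hR'nil : R' = [] := by
    cases R' with
    | nil => rfl
    | cons r'' t =>
      exfalso
      have : (wordR (r'' :: t)).length ≠ 0 := by
        rw [show wordR (r'' :: t) = r''.word ++ wordR t by simp [wordR]]
        simp [Run.word]
      omega
  subst hR'nil
  have hcwlen : (cword k r.B).length = 0 := by
    simp [wordR] at hword
    omega
  have hcw : cword k r.B = [] := List.length_eq_zero_iff.mp hcwlen
  have hB : r.B = [] := (cword_nil_iff hGRr.1.2).mp hcw
  simp only [wordR, List.flatMap_cons, List.flatMap_nil, List.append_nil] at hword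
  rw [Run.word, hcw] at hword
  simp at hword
  obtain ⟨p, q, B⟩ := r
  simp_all

end SSF

namespace SSF
variable {k : ℕ}

@[simp] theorem pblock_zero (c : Bool) : pblock c 0 = [] := rfl

theorem pblock_nil_iff {c : Bool} {e : ℤ} : pblock c e = [] ↔ e = 0 := by
  unfold pblock; split <;> simp_all

theorem altNZ_append_pblock {B₀ : List (Bool × ℤ)} {c : Bool} (e : ℤ)
    (h : AltNZ B₀) (hl : lastTy B₀ ≠ some c) : AltNZ (B₀ ++ pblock c e) := by
  constructor
  · refine List.isChain_append.mpr ⟨h.1, ?_, ?_⟩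
    · unfold pblock; split <;> simp
    · intro y hy z hz
      unfold pblock at hz
      split at hz
      · simp at hz
      · have hz' : z = (c, e) := by
          have := hz; simp at this; exact this.symm
        intro hcon
        apply hl
        have hgl : B₀.getLast? = some y := hy
        rw [lastTy, hgl]
        simp [hcon, hz']
  · intro b hb
    rcases List.mem_append.mp hb with h1 | h2
    · exact h.2 b h1
    · unfold pblock at *
      split at h2
      · simp at h2
      · have : b = (c, e) := by simpa using h2
        subst this
        simpa using ‹¬ e = 0›

theorem lastTy_append_pblock {B₀ : List (Bool × ℤ)} {c : Bool} {e : ℤ} (he : e ≠ 0) :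
    lastTy (B₀ ++ pblock c e) = some c := by
  have : pblock c e = [(c, e)] := by unfold pblock; simp [he]
  rw [this, lastTy, List.getLast?_append_cons]
  simp

theorem halg_merge (B₀ : List (Bool × ℤ)) (c : Bool) (e e' : ℤ) :
    (celt (B₀ ++ pblock c e) * celt (pblock c e') : Fgrp k) = celt (B₀ ++ pblock c (e + e')) := by
  rw [celt_pblock, celt_merge]

section Steps
variable (s : Fin k → ℕ) (x : ℕ)

theorem ssb_zero (m : ℕ) : SSb s m 0 := ⟨∅, by simp⟩

theorem ssb_mono {m m' E : ℕ} (h : m ≤ m') (hE : SSb s m E) : SSb s m' E := by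
  obtain ⟨U, hU, hs⟩ := hE
  exact ⟨U, fun i hi => lt_of_lt_of_le (hU i hi) h, hs⟩

theorem ssb_step {E : ℕ} (i : Fin k) (h : SSb s i.val E) : SSb s (i.val + 1) (E + s i) := by
  obtain ⟨U, hU, hsum⟩ := h
  refine ⟨insert i U, ?_, ?_⟩
  · intro j hj
    rcases Finset.mem_insert.mp hj with rfl | hj
    · omega
    · have := hU j hj; omega
  · rw [Finset.sum_insert (fun hc => absurd (hU i hc) (by omega))]
    omega

theorem ssb_ne (nosol : ¬ ∃ U : Finset (Fin k), ∑ i ∈ U, s i = x)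
    {m E : ℕ} (h : SSb s m E) : E ≠ x := by
  obtain ⟨U, -, hsum⟩ := h
  exact fun hc => nosol ⟨U, by omega⟩

theorem step_matched {R' : List (Run k)} {r : Run k} (hst : State s (R' ++ [r]))
    (j : Widx k) (B' : List (Bool × ℤ))
    (halg : (celt r.B * celt (startB s x j) : Fgrp k) = celt B')
    (hGR : GoodRun (⟨r.p, tgt j, B'⟩ : Run k))
    (hPh : PhaseA s (⟨r.p, tgt j, B'⟩ : Run k) ∨ PhaseB s ⟨r.p, tgt j, B'⟩ ∨
      PhaseC (⟨r.p, tgt j, B'⟩ : Run k))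
    (hq : r.q = src j) :
    State s (R' ++ [(⟨r.p, tgt j, B'⟩ : Run k)]) ∧
      prodR (R' ++ [r]) * Wfam s x j = prodR (R' ++ [(⟨r.p, tgt j, B'⟩ : Run k)]) := by
  obtain ⟨-, hGRs, hCh⟩ := hst
  refine ⟨⟨⟨R', _, rfl, hPh⟩, ?_, ?_⟩, prodR_extend s x R' r j B' hq halg⟩
  · intro r'' hr''
    rcases List.mem_append.mp hr'' with h1 | h2
    · exact hGRs r'' (by simp [h1])
    · have : r'' = (⟨r.p, tgt j, B'⟩ : Run k) := by simpa using h2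
      subst this; exact hGR
  · simp only [List.Chain', List.isChain_append] at hCh ⊢
    refine ⟨hCh.1, by simp, ?_⟩
    intro a ha y hy
    have hy' : y = (⟨r.p, tgt j, B'⟩ : Run k) := by
      have := hy; simp at this; exact this.symm
    subst hy'
    exact hCh.2.2 a ha r (by simp)

theorem step_mismatch {R' : List (Run k)} {r : Run k} (hst : State s (R' ++ [r]))
    (j : Widx k)
    (hGR : GoodRun (startRun s x j))
    (hPh : PhaseA s (startRun s x j) ∨ PhaseB s (startRun s x j) ∨ PhaseC (startRun s x j))
    (hq : r.q ≠ src j) :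
    State s ((R' ++ [r]) ++ [startRun s x j]) ∧
      prodR (R' ++ [r]) * Wfam s x j = prodR ((R' ++ [r]) ++ [startRun s x j]) := by
  obtain ⟨-, hGRs, hCh⟩ := hst
  refine ⟨⟨⟨R' ++ [r], _, rfl, hPh⟩, ?_, ?_⟩, ?_⟩
  · intro r'' hr''
    rcases List.mem_append.mp hr'' with h1 | h2
    · exact hGRs r'' h1
    · have : r'' = startRun s x j := by simpa using h2
      subst this; exact hGR
  · refine List.isChain_append.mpr ?_
    refine ⟨hCh, by simp, ?_⟩
    intro a ha y hy
    have hy' : y = startRun s x j := by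
      have := hy; simp at this; exact this.symm
    subst hy'
    have ha' : a = r := by
      rw [List.getLast?_append_of_ne_nil _ (by simp)] at ha
      have := ha; simp at this; exact this.symm
    subst ha'
    exact hq
  · rw [prodR_append (R' ++ [r]) [startRun s x j], prodR_singleton, W_eq_startRun]

end Steps
end SSF

namespace SSF
variable {k : ℕ} (s : Fin k → ℕ) (x : ℕ)

@[simp] theorem src_val_u (i : Fin k) : (src (Sum.inl i : Widx k)).val = i.val := rfl
@[simp] theorem src_val_v (i : Fin k) : (src (Sum.inr (Sum.inl i) : Widx k)).val = i.val := rfl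
@[simp] theorem src_val_u' (i : Fin k) :
    (src (Sum.inr (Sum.inr (Sum.inl i)) : Widx k)).val = k + i.val + 1 := rfl
@[simp] theorem src_val_v' (i : Fin k) :
    (src (Sum.inr (Sum.inr (Sum.inr (Sum.inl i))) : Widx k)).val = k + i.val + 1 := rfl
@[simp] theorem src_val_c :
    (src (Sum.inr (Sum.inr (Sum.inr (Sum.inr false))) : Widx k)).val = k := rfl
@[simp] theorem src_val_d :
    (src (Sum.inr (Sum.inr (Sum.inr (Sum.inr true))) : Widx k)).val = 2 * k + 1 := rfl
@[simp] theorem tgt_val_u (i : Fin k) : (tgt (Sum.inl i : Widx k)).val = i.val + 1 := rfl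
@[simp] theorem tgt_val_v (i : Fin k) : (tgt (Sum.inr (Sum.inl i) : Widx k)).val = i.val + 1 := rfl
@[simp] theorem tgt_val_u' (i : Fin k) :
    (tgt (Sum.inr (Sum.inr (Sum.inl i)) : Widx k)).val = k + i.val + 2 := rfl
@[simp] theorem tgt_val_v' (i : Fin k) :
    (tgt (Sum.inr (Sum.inr (Sum.inr (Sum.inl i))) : Widx k)).val = k + i.val + 2 := rfl
@[simp] theorem tgt_val_c :
    (tgt (Sum.inr (Sum.inr (Sum.inr (Sum.inr false))) : Widx k)).val = k + 1 := rfl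
@[simp] theorem tgt_val_d :
    (tgt (Sum.inr (Sum.inr (Sum.inr (Sum.inr true))) : Widx k)).val = 0 := rfl

@[simp] theorem startRun_p (s : Fin k → ℕ) (x : ℕ) (j : Widx k) :
    (startRun s x j).p = src j := rfl
@[simp] theorem startRun_q (s : Fin k → ℕ) (x : ℕ) (j : Widx k) :
    (startRun s x j).q = tgt j := rfl
@[simp] theorem startRun_B (s : Fin k → ℕ) (x : ℕ) (j : Widx k) :
    (startRun s x j).B = startB s x j := rfl
@[simp] theorem startB_u (i : Fin k) :
    startB s x (Sum.inl i) = pblock false (s i : ℤ) := rfl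
@[simp] theorem startB_v (i : Fin k) :
    startB s x (Sum.inr (Sum.inl i)) = [] := rfl
@[simp] theorem startB_u' (i : Fin k) :
    startB s x (Sum.inr (Sum.inr (Sum.inl i))) = pblock true (s i : ℤ) := rfl
@[simp] theorem startB_v' (i : Fin k) :
    startB s x (Sum.inr (Sum.inr (Sum.inr (Sum.inl i)))) = [] := rfl
@[simp] theorem startB_c :
    startB s x (Sum.inr (Sum.inr (Sum.inr (Sum.inr false)))) = pblock false (-(x:ℤ)) := rfl
@[simp] theorem startB_d :
    startB s x (Sum.inr (Sum.inr (Sum.inr (Sum.inr true)))) = pblock true (-(x:ℤ)) := rfl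

theorem altNZ_nil : AltNZ ([] : List (Bool × ℤ)) := ⟨by simp [List.Chain'], by simp⟩

theorem altNZ_prefix {B₀ B₁ : List (Bool × ℤ)} (h : AltNZ (B₀ ++ B₁)) : AltNZ B₀ :=
  ⟨(List.isChain_append.mp h.1).1, fun b hb => h.2 b (by simp [hb])⟩

theorem altNZ_pblock (c : Bool) (e : ℤ) : AltNZ (pblock c e) := by
  have := altNZ_append_pblock (B₀ := []) (c := c) e altNZ_nil (by simp [lastTy])
  simpa using this

theorem startRun_good (hs : ∀ i, 0 < s i) (hx : 0 < x) (j : Widx k) :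
    GoodRun (startRun s x j) := by
  rcases j with i | i | i | i | b
  · refine ⟨by simpa using altNZ_pblock false (s i : ℤ), fun h => ?_⟩
    simp [pblock_nil_iff] at h
    have := hs i; omega
  · exact ⟨by simpa using altNZ_nil, fun _ => by simp⟩
  · refine ⟨by simpa using altNZ_pblock true (s i : ℤ), fun h => ?_⟩
    simp [pblock_nil_iff] at h
    have := hs i; omega
  · exact ⟨by simpa using altNZ_nil, fun _ => by simp⟩
  · cases b
    · refine ⟨by simpa using altNZ_pblock false (-(x:ℤ)), fun h => ?_⟩
      simp [pblock_nil_iff] at h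
      omega
    · refine ⟨by simpa using altNZ_pblock true (-(x:ℤ)), fun h => ?_⟩
      simp [pblock_nil_iff] at h
      omega

theorem startRun_phase (hx : 0 < x) (j : Widx k) :
    PhaseA s (startRun s x j) ∨ PhaseB s (startRun s x j) ∨ PhaseC (startRun s x j) := by
  rcases j with i | i | i | i | b
  · left
    refine ⟨[], s i, by simp, by simp <;> omega, ⟨{i}, by simp, by simp⟩, by simp, by simp [lastTy]⟩
  · left
    refine ⟨[], 0, by simp, by simp <;> omega, ssb_zero s _, by simp, by simp [lastTy]⟩
  · right; left
    refine ⟨[], s i, by simp <;> omega, ?_, by simp, by simp [lastTy]⟩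
    refine ⟨{i}, ?_, by simp⟩
    intro j hj
    simp at hj
    subst hj
    simp
    omega
  · right; left
    refine ⟨[], 0, by simp <;> omega, ?_, by simp, by simp [lastTy]⟩
    exact ssb_zero s _
  · cases b
    · right; left
      refine ⟨pblock false (-(x:ℤ)), 0, by simp, ?_, by simp, ?_⟩
      · exact ssb_zero s _
      · rw [show pblock false (-(x:ℤ)) = [] ++ pblock false (-(x:ℤ)) by simp,
          lastTy_append_pblock (by omega)]
        simp
    · right; right
      refine ⟨by simp, ?_⟩
      rw [startRun_B, startB_d,
        show pblock true (-(x:ℤ)) = [] ++ pblock true (-(x:ℤ)) by simp]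
      exact lastTy_append_pblock (by omega)

theorem startRun_triv (hk : 1 ≤ k) (hs : ∀ i, 0 < s i) (hx : 0 < x) (j : Widx k)
    (h : startRun s x j = ⟨z0 k, z1 k, []⟩) : j = Sum.inr (Sum.inl (⟨0, hk⟩ : Fin k)) := by
  have hB := congrArg Run.B h
  have hp := congrArg (fun r => (Run.p r).val) h
  have hq := congrArg (fun r => (Run.q r).val) h
  simp [z0, z1, -Fin.val_eq_zero_iff] at hB hp hq
  rcases j with i | i | i | i | b
  · rw [startB_u, pblock_nil_iff] at hB
    have := hs i
    omega
  · congr 1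
    congr 1
    have : i.val = 0 := by simpa using hp
    exact Fin.ext this
  · simp at hp
  · simp at hp
  · cases b
    · rw [startB_c, pblock_nil_iff] at hB
      omega
    · rw [startB_d, pblock_nil_iff] at hB
      omega

end SSF

namespace SSF
variable {k : ℕ} (s : Fin k → ℕ) (x : ℕ)

theorem last_of_state {R' : List (Run k)} {r : Run k} (hst : State s (R' ++ [r])) :
    PhaseA s r ∨ PhaseB s r ∨ PhaseC r := by
  obtain ⟨⟨R₀, r₀, hEq, hPh⟩, -, -⟩ := hst
  have h1 := congrArg List.getLast? hEq
  rw [List.getLast?_append_of_ne_nil _ (by simp),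
    List.getLast?_append_of_ne_nil _ (by simp)] at h1
  have : r = r₀ := by simpa using h1
  rw [this]
  exact hPh

theorem main_inv (hk : 1 ≤ k) (hs : ∀ i, 0 < s i) (hx : 0 < x)
    (nosol : ¬ ∃ U : Finset (Fin k), ∑ i ∈ U, s i = x) :
    ∀ l : List (Widx k), l ≠ [] →
      ∃ (R' : List (Run k)) (r : Run k), State s (R' ++ [r]) ∧
        (l.map (Wfam s x)).prod = prodR (R' ++ [r]) ∧
        (R' = [] ∧ r = ⟨z0 k, z1 k, []⟩ → l = [Sum.inr (Sum.inl (⟨0, hk⟩ : Fin k))]) := by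
  intro l
  induction l using List.reverseRecOn with
  | nil => intro h; exact absurd rfl h
  | append_singleton l j ih =>
    intro _
    by_cases hl : l = []
    · subst hl
      refine ⟨[], startRun s x j, ?_, ?_, ?_⟩
      · exact ⟨⟨[], startRun s x j, rfl, startRun_phase s x hx j⟩,
          fun r' hr' => by
            have : r' = startRun s x j := by simpa using hr'
            subst this; exact startRun_good s x hs hx j,
          by simp [List.Chain']⟩
      · simp [prodR_singleton, W_eq_startRun]
      · rintro ⟨-, hreq⟩
        rw [startRun_triv s x hk hs hx j hreq]
        simp
    · obtain ⟨R', r, hst, hprod, -⟩ := ih hl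
      have hmul0 : ((l ++ [j]).map (Wfam s x)).prod
          = prodR (R' ++ [r]) * Wfam s x j := by
        rw [List.map_append, List.prod_append, hprod]
        simp
      by_cases hq : r.q = src j
      · -- matched step
        have hGRr : GoodRun r := hst.2.1 r (by simp)
        have hqv := congrArg Fin.val hq
        have hph := last_of_state s hst
        rcases j with i | i | i | i | b
        · -- j = u i
          rcases hph with ⟨B₀, E, hq1, hq2, hSS, hB, hlastB⟩ | ⟨B₁, F, hq1, hSS, hB, hlastB⟩
            | ⟨hq0, hlastB⟩
          · -- Phase A, u i
            rw [src_val_u] at hqv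
            have halg : (celt r.B * celt (startB s x (Sum.inl i)) : Fgrp k)
                = celt (B₀ ++ pblock false ((E + s i : ℕ) : ℤ)) := by
              rw [hB, startB_u, halg_merge, Nat.cast_add]
            have hGR : GoodRun (⟨r.p, tgt (Sum.inl i), B₀ ++ pblock false ((E + s i : ℕ) : ℤ)⟩
                : Run k) := by
              refine ⟨altNZ_append_pblock _ (altNZ_prefix (hB ▸ hGRr.1)) hlastB, fun hnil => ?_⟩
              exfalso
              rcases List.append_eq_nil_iff.mp hnil with ⟨-, h2⟩
              rw [pblock_nil_iff] at h2
              have := hs i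
              omega
            have hPh : PhaseA s (⟨r.p, tgt (Sum.inl i), B₀ ++ pblock false ((E + s i : ℕ) : ℤ)⟩
                : Run k) := by
              refine ⟨B₀, E + s i, by simp, by simp <;> omega, ?_, rfl, hlastB⟩
              have := ssb_step s (E := E) i (by rwa [← hqv])
              simpa using this
            obtain ⟨hstate, hmul⟩ := step_matched s x hst (Sum.inl i) _ halg hGR (Or.inl hPh) hq
            refine ⟨R', _, hstate, by rw [hmul0, hmul], ?_⟩
            rintro ⟨-, hreq⟩
            exfalso
            have hBnil := congrArg Run.B hreq
            simp [pblock_nil_iff] at hBnil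
            have := hs i
            omega
          · rw [src_val_u] at hqv
            have := i.isLt
            omega
          · rw [src_val_u] at hqv
            -- Phase C, u i
            have halg : (celt r.B * celt (startB s x (Sum.inl i)) : Fgrp k)
                = celt (r.B ++ pblock false ((s i : ℕ) : ℤ)) := by
              rw [startB_u, celt_append, celt_pblock]
            have hrBne : r.B ≠ [] := by
              intro h
              rw [h] at hlastB
              simp [lastTy] at hlastB
            have hGR : GoodRun (⟨r.p, tgt (Sum.inl i), r.B ++ pblock false ((s i : ℕ) : ℤ)⟩
                : Run k) := by
              refine ⟨altNZ_append_pblock _ hGRr.1 (by rw [hlastB]; simp), fun hnil => ?_⟩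
              exact absurd (List.append_eq_nil_iff.mp hnil).1 hrBne
            have hPh : PhaseA s (⟨r.p, tgt (Sum.inl i), r.B ++ pblock false ((s i : ℕ) : ℤ)⟩
                : Run k) := by
              refine ⟨r.B, s i, by simp, by simp, ?_, rfl, by rw [hlastB]; simp⟩
              exact ⟨{i}, by simp, by simp⟩
            obtain ⟨hstate, hmul⟩ := step_matched s x hst (Sum.inl i) _ halg hGR (Or.inl hPh) hq
            refine ⟨R', _, hstate, by rw [hmul0, hmul], ?_⟩
            rintro ⟨-, hreq⟩
            exfalso
            have hBnil := congrArg Run.B hreq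
            simp at hBnil
            exact hrBne hBnil.1
        · -- j = v i
          rcases hph with ⟨B₀, E, hq1, hq2, hSS, hB, hlastB⟩ | ⟨B₁, F, hq1, hSS, hB, hlastB⟩
            | ⟨hq0, hlastB⟩
          · -- Phase A, v i
            rw [src_val_v] at hqv
            have halg : (celt r.B * celt (startB s x (Sum.inr (Sum.inl i))) : Fgrp k)
                = celt (B₀ ++ pblock false ((E : ℕ) : ℤ)) := by
              rw [hB, startB_v]
              simp [celt]
            have hGR : GoodRun (⟨r.p, tgt (Sum.inr (Sum.inl i)), B₀ ++ pblock false ((E : ℕ) : ℤ)⟩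
                : Run k) := by
              refine ⟨hB ▸ hGRr.1, fun hnil => ?_⟩
              have h1 : r.B = [] := by rw [hB]; exact hnil
              have h2 := hGRr.2 h1
              show (r.p : ℕ) < (tgt (Sum.inr (Sum.inl i))).val
              rw [tgt_val_v]
              omega
            have hPh : PhaseA s (⟨r.p, tgt (Sum.inr (Sum.inl i)),
                B₀ ++ pblock false ((E : ℕ) : ℤ)⟩ : Run k) := by
              refine ⟨B₀, E, by simp, by simp, ?_, rfl, hlastB⟩
              exact ssb_mono s (m' := (tgt (Sum.inr (Sum.inl i))).val)
                (by rw [tgt_val_v]; omega) (hqv ▸ hSS)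
            obtain ⟨hstate, hmul⟩ := step_matched s x hst (Sum.inr (Sum.inl i)) _ halg hGR
              (Or.inl hPh) hq
            refine ⟨R', _, hstate, by rw [hmul0, hmul], ?_⟩
            rintro ⟨-, hreq⟩
            exfalso
            have hqe := congrArg (fun r' => (Run.q r').val) hreq
            simp [z1] at hqe <;> omega
          · rw [src_val_v] at hqv
            have := i.isLt
            omega
          · rw [src_val_v] at hqv
            -- Phase C, v i
            have halg : (celt r.B * celt (startB s x (Sum.inr (Sum.inl i))) : Fgrp k)
                = celt (r.B ++ pblock false ((0 : ℕ) : ℤ)) := by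
              rw [startB_v]
              simp [celt]
            have hrBne : r.B ≠ [] := by
              intro h
              rw [h] at hlastB
              simp [lastTy] at hlastB
            have hGR : GoodRun (⟨r.p, tgt (Sum.inr (Sum.inl i)),
                r.B ++ pblock false ((0 : ℕ) : ℤ)⟩ : Run k) := by
              refine ⟨by simpa using hGRr.1, fun hnil => ?_⟩
              exact absurd (by simpa using hnil) hrBne
            have hPh : PhaseA s (⟨r.p, tgt (Sum.inr (Sum.inl i)),
                r.B ++ pblock false ((0 : ℕ) : ℤ)⟩ : Run k) := by
              refine ⟨r.B, 0, by simp, by simp, ssb_zero s _, rfl,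
                by rw [hlastB]; simp⟩
            obtain ⟨hstate, hmul⟩ := step_matched s x hst (Sum.inr (Sum.inl i)) _ halg hGR
              (Or.inl hPh) hq
            refine ⟨R', _, hstate, by rw [hmul0, hmul], ?_⟩
            rintro ⟨-, hreq⟩
            exfalso
            have hBnil := congrArg Run.B hreq
            simp at hBnil
            exact hrBne hBnil
        · -- j = u' i
          rcases hph with ⟨B₀, E, hq1, hq2, hSS, hB, hlastB⟩ | ⟨B₁, F, hq1, hSS, hB, hlastB⟩
            | ⟨hq0, hlastB⟩
          · rw [src_val_u'] at hqv; omega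
          · -- Phase B, u' i
            rw [src_val_u'] at hqv
            have hSS' : SSb s i.val F := by
              have : r.q.val - (k+1) = i.val := by omega
              rwa [this] at hSS
            have halg : (celt r.B * celt (startB s x (Sum.inr (Sum.inr (Sum.inl i)))) : Fgrp k)
                = celt (B₁ ++ pblock true ((F + s i : ℕ) : ℤ)) := by
              rw [hB, startB_u', halg_merge, Nat.cast_add]
            have hGR : GoodRun (⟨r.p, tgt (Sum.inr (Sum.inr (Sum.inl i))),
                B₁ ++ pblock true ((F + s i : ℕ) : ℤ)⟩ : Run k) := by
              refine ⟨altNZ_append_pblock _ (altNZ_prefix (hB ▸ hGRr.1)) hlastB, fun hnil => ?_⟩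
              exfalso
              rcases List.append_eq_nil_iff.mp hnil with ⟨-, h2⟩
              rw [pblock_nil_iff] at h2
              have := hs i
              omega
            have hPh : PhaseB s (⟨r.p, tgt (Sum.inr (Sum.inr (Sum.inl i))),
                B₁ ++ pblock true ((F + s i : ℕ) : ℤ)⟩ : Run k) := by
              refine ⟨B₁, F + s i, by simp <;> omega, ?_, rfl, hlastB⟩
              have heq : (k + i.val + 2) - (k+1) = i.val + 1 := by omega
              simp only [tgt_val_u', heq]
              exact ssb_step s i hSS'
            obtain ⟨hstate, hmul⟩ := step_matched s x hst (Sum.inr (Sum.inr (Sum.inl i))) _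
              halg hGR (Or.inr (Or.inl hPh)) hq
            refine ⟨R', _, hstate, by rw [hmul0, hmul], ?_⟩
            rintro ⟨-, hreq⟩
            exfalso
            have hqe := congrArg (fun r' => (Run.q r').val) hreq
            simp [z1] at hqe <;> omega
          · rw [src_val_u'] at hqv; omega
        · -- j = v' i
          rcases hph with ⟨B₀, E, hq1, hq2, hSS, hB, hlastB⟩ | ⟨B₁, F, hq1, hSS, hB, hlastB⟩
            | ⟨hq0, hlastB⟩
          · rw [src_val_v'] at hqv; omega
          · -- Phase B, v' i
            rw [src_val_v'] at hqv
            have hSS' : SSb s i.val F := by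
              have : r.q.val - (k+1) = i.val := by omega
              rwa [this] at hSS
            have halg : (celt r.B * celt (startB s x (Sum.inr (Sum.inr (Sum.inr (Sum.inl i)))))
                : Fgrp k) = celt (B₁ ++ pblock true ((F : ℕ) : ℤ)) := by
              rw [hB, startB_v']
              simp [celt]
            have hGR : GoodRun (⟨r.p, tgt (Sum.inr (Sum.inr (Sum.inr (Sum.inl i)))),
                B₁ ++ pblock true ((F : ℕ) : ℤ)⟩ : Run k) := by
              refine ⟨hB ▸ hGRr.1, fun hnil => ?_⟩
              have h1 : r.B = [] := by rw [hB]; exact hnil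
              have h2 := hGRr.2 h1
              show (r.p : ℕ) < (tgt (Sum.inr (Sum.inr (Sum.inr (Sum.inl i))))).val
              rw [tgt_val_v']
              omega
            have hPh : PhaseB s (⟨r.p, tgt (Sum.inr (Sum.inr (Sum.inr (Sum.inl i)))),
                B₁ ++ pblock true ((F : ℕ) : ℤ)⟩ : Run k) := by
              refine ⟨B₁, F, by simp <;> omega, ?_, rfl, hlastB⟩
              have heq : (k + i.val + 2) - (k+1) = i.val + 1 := by omega
              simp only [tgt_val_v', heq]
              exact ssb_mono s (by omega) hSS'
            obtain ⟨hstate, hmul⟩ := step_matched s x hst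
              (Sum.inr (Sum.inr (Sum.inr (Sum.inl i)))) _ halg hGR (Or.inr (Or.inl hPh)) hq
            refine ⟨R', _, hstate, by rw [hmul0, hmul], ?_⟩
            rintro ⟨-, hreq⟩
            exfalso
            have hqe := congrArg (fun r' => (Run.q r').val) hreq
            simp [z1] at hqe <;> omega
          · rw [src_val_v'] at hqv; omega
        · cases b
          · -- j = c
            rcases hph with ⟨B₀, E, hq1, hq2, hSS, hB, hlastB⟩ | ⟨B₁, F, hq1, hSS, hB, hlastB⟩
              | ⟨hq0, hlastB⟩
            · -- Phase A, c
              rw [src_val_c] at hqv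
              have hEx : E ≠ x := ssb_ne s x nosol hSS
              have hnz : (E : ℤ) + -(x : ℤ) ≠ 0 := by omega
              have halg : (celt r.B *
                  celt (startB s x (Sum.inr (Sum.inr (Sum.inr (Sum.inr false))))) : Fgrp k)
                  = celt (B₀ ++ pblock false ((E : ℤ) + -(x : ℤ))) := by
                rw [hB, startB_c, halg_merge]
              have hGR : GoodRun (⟨r.p, tgt (Sum.inr (Sum.inr (Sum.inr (Sum.inr false)))),
                  B₀ ++ pblock false ((E : ℤ) + -(x : ℤ))⟩ : Run k) := by
                refine ⟨altNZ_append_pblock _ (altNZ_prefix (hB ▸ hGRr.1)) hlastB, fun hnil => ?_⟩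
                exfalso
                rcases List.append_eq_nil_iff.mp hnil with ⟨-, h2⟩
                rw [pblock_nil_iff] at h2
                exact hnz h2
              have hPh : PhaseB s (⟨r.p, tgt (Sum.inr (Sum.inr (Sum.inr (Sum.inr false)))),
                  B₀ ++ pblock false ((E : ℤ) + -(x : ℤ))⟩ : Run k) := by
                refine ⟨B₀ ++ pblock false ((E : ℤ) + -(x : ℤ)), 0, by simp, ?_, by simp, ?_⟩
                · simp
                  exact ssb_zero s _
                · rw [lastTy_append_pblock hnz]
                  simp
              obtain ⟨hstate, hmul⟩ := step_matched s x hst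
                (Sum.inr (Sum.inr (Sum.inr (Sum.inr false)))) _ halg hGR
                (Or.inr (Or.inl hPh)) hq
              refine ⟨R', _, hstate, by rw [hmul0, hmul], ?_⟩
              rintro ⟨-, hreq⟩
              exfalso
              have hBnil := congrArg Run.B hreq
              simp [pblock_nil_iff] at hBnil
              omega
            · rw [src_val_c] at hqv; omega
            · rw [src_val_c] at hqv; omega
          · -- j = d
            rcases hph with ⟨B₀, E, hq1, hq2, hSS, hB, hlastB⟩ | ⟨B₁, F, hq1, hSS, hB, hlastB⟩
              | ⟨hq0, hlastB⟩
            · rw [src_val_d] at hqv; omega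
            · -- Phase B, d
              rw [src_val_d] at hqv
              have hSSk : SSb s k F := by
                have : r.q.val - (k+1) = k := by omega
                rwa [this] at hSS
              have hFx : F ≠ x := ssb_ne s x nosol hSSk
              have hnz : (F : ℤ) + -(x : ℤ) ≠ 0 := by omega
              have halg : (celt r.B *
                  celt (startB s x (Sum.inr (Sum.inr (Sum.inr (Sum.inr true))))) : Fgrp k)
                  = celt (B₁ ++ pblock true ((F : ℤ) + -(x : ℤ))) := by
                rw [hB, startB_d, halg_merge]
              have hGR : GoodRun (⟨r.p, tgt (Sum.inr (Sum.inr (Sum.inr (Sum.inr true)))),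
                  B₁ ++ pblock true ((F : ℤ) + -(x : ℤ))⟩ : Run k) := by
                refine ⟨altNZ_append_pblock _ (altNZ_prefix (hB ▸ hGRr.1)) hlastB, fun hnil => ?_⟩
                exfalso
                rcases List.append_eq_nil_iff.mp hnil with ⟨-, h2⟩
                rw [pblock_nil_iff] at h2
                exact hnz h2
              have hPh : PhaseC (⟨r.p, tgt (Sum.inr (Sum.inr (Sum.inr (Sum.inr true)))),
                  B₁ ++ pblock true ((F : ℤ) + -(x : ℤ))⟩ : Run k) := by
                exact ⟨by simp, lastTy_append_pblock hnz⟩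
              obtain ⟨hstate, hmul⟩ := step_matched s x hst
                (Sum.inr (Sum.inr (Sum.inr (Sum.inr true)))) _ halg hGR
                (Or.inr (Or.inr hPh)) hq
              refine ⟨R', _, hstate, by rw [hmul0, hmul], ?_⟩
              rintro ⟨-, hreq⟩
              exfalso
              have hqe := congrArg (fun r' => (Run.q r').val) hreq
              simp [z1] at hqe
            · rw [src_val_d] at hqv; omega
      · -- mismatched step
        obtain ⟨hstate, hmul⟩ := step_mismatch s x hst j (startRun_good s x hs hx j)
          (startRun_phase s x hx j) hq
        refine ⟨R' ++ [r], startRun s x j, hstate, by rw [hmul0, hmul], ?_⟩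
        rintro ⟨habs, -⟩
        simp at habs

end SSF

namespace SSF
variable {k : ℕ} (s : Fin k → ℕ) (x : ℕ)

theorem only_triv (hk : 1 ≤ k) (hs : ∀ i, 0 < s i) (hx : 0 < x)
    (nosol : ¬ ∃ U : Finset (Fin k), ∑ i ∈ U, s i = x) (l : List (Widx k)) (hl : l ≠ [])
    (hprod : (l.map (Wfam s x)).prod = gGen (z0 k) * (gGen (z1 k))⁻¹) :
    l = [Sum.inr (Sum.inl (⟨0, hk⟩ : Fin k))] := by
  obtain ⟨R', r, hst, hpeq, htriv⟩ := main_inv s x hk hs hx nosol l hl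
  have hnf := state_nf hst (by rw [← hpeq]; exact hprod)
  have hR' : R' = [] := by
    have hlen := congrArg List.length hnf
    simp at hlen
    exact hlen
  subst hR'
  have hr : r = ⟨z0 k, z1 k, []⟩ := by simpa using hnf
  exact htriv ⟨rfl, hr⟩

/-! ### The easy direction: a subset-sum solution gives infinitely many factorizations -/

section Easy
variable (U : Finset (Fin k))

/-- choice of `u i` or `v i` according to membership in `U`, as a function on `ℕ` -/
def fA (t : ℕ) : Widx k :=
  if h : t < k then (if (⟨t, h⟩ : Fin k) ∈ U then Sum.inl (⟨t, h⟩ : Fin k)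
    else Sum.inr (Sum.inl (⟨t, h⟩ : Fin k)))
  else Sum.inr (Sum.inr (Sum.inr (Sum.inr true)))

def fB (t : ℕ) : Widx k :=
  if h : t < k then (if (⟨t, h⟩ : Fin k) ∈ U then Sum.inr (Sum.inr (Sum.inl (⟨t, h⟩ : Fin k)))
    else Sum.inr (Sum.inr (Sum.inr (Sum.inl (⟨t, h⟩ : Fin k)))))
  else Sum.inr (Sum.inr (Sum.inr (Sum.inr true)))

theorem sum_step (m : ℕ) (hm : m < k) :
    (∑ i ∈ U, if (i : ℕ) < m + 1 then s i else 0)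
      = (∑ i ∈ U, if (i : ℕ) < m then s i else 0)
        + (if (⟨m, hm⟩ : Fin k) ∈ U then s ⟨m, hm⟩ else 0) := by
  rw [show (if (⟨m, hm⟩ : Fin k) ∈ U then s ⟨m, hm⟩ else 0)
      = ∑ i ∈ U, if i = ⟨m, hm⟩ then s i else 0 from (Finset.sum_ite_eq' U _ s).symm,
    ← Finset.sum_add_distrib]
  refine Finset.sum_congr rfl fun i _ => ?_
  by_cases h1 : (i : ℕ) < m
  · have h2 : (i : ℕ) < m + 1 := by omega
    have h3 : i ≠ ⟨m, hm⟩ := by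
      intro hc
      rw [hc] at h1
      simp at h1
    simp [h1, h2, h3]
  · by_cases h2 : (i : ℕ) = m
    · have h3 : i = ⟨m, hm⟩ := Fin.ext h2
      have h4 : (i : ℕ) < m + 1 := by omega
      simp [h1, h3, h4]
    · have h4 : ¬ (i : ℕ) < m + 1 := by omega
      have h3 : i ≠ ⟨m, hm⟩ := by
        intro hc
        rw [hc] at h2
        simp at h2
      simp [h1, h4, h3]

theorem segA_prod : ∀ m, (hm : m ≤ k) →
    (((List.range m).map (fA U)).map (Wfam s x)).prod
      = gGen ⟨0, by omega⟩ * aGen ^ (∑ i ∈ U, if (i : ℕ) < m then s i else 0)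
          * (gGen (⟨m, by omega⟩ : Fin (2*k+2)))⁻¹ := by
  intro m
  induction m with
  | zero =>
    intro hm
    simp
  | succ m ih =>
    intro hm
    have hmk : m < k := by omega
    rw [List.range_succ, List.map_append, List.map_append, List.prod_append, ih (by omega)]
    have hfA : fA U m = if (⟨m, hmk⟩ : Fin k) ∈ U then Sum.inl (⟨m, hmk⟩ : Fin k)
        else Sum.inr (Sum.inl (⟨m, hmk⟩ : Fin k)) := by
      rw [fA, dif_pos hmk]
    rw [sum_step s U m hmk]
    simp only [List.map_cons, List.map_nil, List.prod_cons, List.prod_nil, mul_one]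
    by_cases hmem : (⟨m, hmk⟩ : Fin k) ∈ U
    · rw [hfA, if_pos hmem, if_pos hmem]
      show _ * (Wfam s x (Sum.inl ⟨m, hmk⟩)) = _
      rw [Wfam, pow_add]
      group
    · rw [hfA, if_neg hmem, if_neg hmem]
      show _ * (Wfam s x (Sum.inr (Sum.inl ⟨m, hmk⟩))) = _
      rw [Wfam, add_zero]
      group

theorem segB_prod : ∀ m, (hm : m ≤ k) →
    (((List.range m).map (fB U)).map (Wfam s x)).prod
      = gGen ⟨k + 1, by omega⟩ * bGen ^ (∑ i ∈ U, if (i : ℕ) < m then s i else 0)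
          * (gGen (⟨k + 1 + m, by omega⟩ : Fin (2*k+2)))⁻¹ := by
  intro m
  induction m with
  | zero =>
    intro hm
    simp
  | succ m ih =>
    intro hm
    have hmk : m < k := by omega
    rw [List.range_succ, List.map_append, List.map_append, List.prod_append, ih (by omega)]
    have hfB : fB U m = if (⟨m, hmk⟩ : Fin k) ∈ U
        then Sum.inr (Sum.inr (Sum.inl (⟨m, hmk⟩ : Fin k)))
        else Sum.inr (Sum.inr (Sum.inr (Sum.inl (⟨m, hmk⟩ : Fin k)))) := by
      rw [fB, dif_pos hmk]
    rw [sum_step s U m hmk]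
    have hFin1 : (⟨k + 1 + m, by omega⟩ : Fin (2*k+2)) = ⟨k +  m + 1, by omega⟩ := by
      apply Fin.ext
      show k + 1 + m = k + m + 1
      omega
    have hFin2 : (⟨k + 1 + (m + 1), by omega⟩ : Fin (2*k+2)) = ⟨k + m + 2, by omega⟩ := by
      apply Fin.ext
      show k + 1 + (m + 1) = k + m + 2
      omega
    rw [hFin1, hFin2]
    simp only [List.map_cons, List.map_nil, List.prod_cons, List.prod_nil, mul_one]
    by_cases hmem : (⟨m, hmk⟩ : Fin k) ∈ U
    · rw [hfB, if_pos hmem, if_pos hmem]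
      show _ * (Wfam s x (Sum.inr (Sum.inr (Sum.inl ⟨m, hmk⟩)))) = _
      rw [Wfam, pow_add]
      group
    · rw [hfB, if_neg hmem, if_neg hmem]
      show _ * (Wfam s x (Sum.inr (Sum.inr (Sum.inr (Sum.inl ⟨m, hmk⟩))))) = _
      rw [Wfam, add_zero]
      group

def loopL : List (Widx k) :=
  (List.range k).map (fA U) ++ [Sum.inr (Sum.inr (Sum.inr (Sum.inr false)))]
    ++ (List.range k).map (fB U) ++ [Sum.inr (Sum.inr (Sum.inr (Sum.inr true)))]

theorem loopL_prod (hsum : ∑ i ∈ U, s i = x) :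
    ((loopL U).map (Wfam s x)).prod = 1 := by
  have hfull : (∑ i ∈ U, if (i : ℕ) < k then s i else 0) = x := by
    rw [← hsum]
    exact Finset.sum_congr rfl fun i _ => if_pos i.isLt
  rw [loopL]
  simp only [List.map_append, List.prod_append, List.map_cons, List.map_nil,
    List.prod_cons, List.prod_nil, mul_one]
  rw [segA_prod s x U k le_rfl, segB_prod s x U k le_rfl, hfull]
  have hFin3 : (⟨k + 1 + k, by omega⟩ : Fin (2*k+2)) = ⟨2*k+1, by omega⟩ := by
    apply Fin.ext
    show k + 1 + k = 2*k+1
    omega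
  rw [hFin3]
  show _ * Wfam s x (Sum.inr (Sum.inr (Sum.inr (Sum.inr false)))) * _
      * Wfam s x (Sum.inr (Sum.inr (Sum.inr (Sum.inr true)))) = 1
  rw [Wfam, Wfam]
  group

def fam (hk : 1 ≤ k) (n : ℕ) : List (Widx k) :=
  match n with
  | 0 => [Sum.inr (Sum.inl (⟨0, hk⟩ : Fin k))]
  | n + 1 => loopL U ++ fam hk n

theorem fam_prod (hk : 1 ≤ k) (hsum : ∑ i ∈ U, s i = x) (n : ℕ) :
    ((fam U hk n).map (Wfam s x)).prod = gGen (z0 k) * (gGen (z1 k))⁻¹ := by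
  induction n with
  | zero =>
    simp [fam, Wfam, z0, z1]
  | succ n ih =>
    rw [fam, List.map_append, List.prod_append, loopL_prod s x U hsum, one_mul, ih]

theorem fam_length (hk : 1 ≤ k) (n : ℕ) : (fam U hk n).length = n * (2*k+2) + 1 := by
  induction n with
  | zero => simp [fam]
  | succ n ih =>
    rw [fam, List.length_append, ih, loopL]
    simp
    ring

theorem fam_injective (hk : 1 ≤ k) : Function.Injective (fam U hk) := by
  intro a b h
  have hh := congrArg List.length h
  rw [fam_length, fam_length] at hh
  have h2 : a * (2*k+2) = b * (2*k+2) := by omega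
  exact Nat.eq_of_mul_eq_mul_right (by omega) h2

theorem fam_ne_nil (hk : 1 ≤ k) (n : ℕ) : fam U hk n ≠ [] := by
  intro h
  have := congrArg List.length h
  rw [fam_length] at this
  simp at this

end Easy
end SSF


/-- The element `v₁ = g₀ · g₁⁻¹` has infinitely many distinct factorizations over the
family `W` iff the subset sum instance `(s₁,…,s_k; x)` has a solution. -/
theorem v1_infinitely_many_factorizations_iff_subset_sum (k : ℕ) (hk : 1 ≤ k)
    (s : Fin k → ℕ) (hs : ∀ i, 0 < s i) (x : ℕ) (hx : 0 < x) :
    { l : List (Widx k) | l ≠ [] ∧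
        (l.map (Wfam s x)).prod = gGen ⟨0, by omega⟩ * (gGen ⟨1, by omega⟩)⁻¹ }.Infinite ↔
      (∃ U : Finset (Fin k), ∑ i ∈ U, s i = x) := by

  constructor
  · intro hinf
    by_contra nosol
    apply hinf
    apply Set.Finite.subset (Set.finite_singleton [Sum.inr (Sum.inl (⟨0, hk⟩ : Fin k))])
    rintro l ⟨hl, hprod⟩
    simp only [Set.mem_singleton_iff]
    exact SSF.only_triv s x hk hs hx nosol l hl hprod
  · rintro ⟨U, hU⟩
    apply Set.infinite_of_injective_forall_mem (f := SSF.fam U hk)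
    · exact SSF.fam_injective U hk
    · intro n
      exact ⟨SSF.fam_ne_nil U hk n, SSF.fam_prod s x U hk hU n⟩
end
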